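/- arXiv:0904.1393 — 9 statements merged into one kernel-verified Lean document; each statement's English description precedes it below -/
import Mathlib

section
/- Let x : [t₀,∞) → ℝ (t₀ ≥ 1) be a C¹ function and define u(t) = t·x′(t) − x(t). If u is bounded on [t₀,∞), then there exists x₁ ∈ ℝ such that x(t)/t → x₁ and x′(t) → x₁ as t → +∞; in other words x(t) = x₁t + o(t) and x′(t) = x₁ + o(1) when t → +∞. -/
open Filter Set MeasureTheory

/-- Lemma 1 (i): if `u(t) = t·x′(t) − x(t)` is bounded on `[t₀, ∞)` (with `t₀ ≥ 1`),
then there is `x₁ ∈ ℝ` with `x(t)/t → x₁` and `x′(t) → x₁` as `t → +∞`. -/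
theorem asymptotically_linear_slope_of_u_bounded
    (t₀ : ℝ) (ht₀ : 1 ≤ t₀) (x x' : ℝ → ℝ)
    (hx : ∀ t ∈ Set.Ici t₀, HasDerivAt x (x' t) t)
    (hx' : ContinuousOn x' (Set.Ici t₀))
    (U : ℝ) (hU : ∀ t ∈ Set.Ici t₀, |t * x' t - x t| ≤ U) :
    ∃ x₁ : ℝ,
      Tendsto (fun t => x t / t) atTop (nhds x₁) ∧
      Tendsto x' atTop (nhds x₁) := by
  have ht₀pos : (0:ℝ) < t₀ := lt_of_lt_of_le one_pos ht₀
  set g : ℝ → ℝ := fun s => (x' s * s - x s) / s ^ 2 with hg_def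
  have hxcont : ContinuousOn x (Set.Ici t₀) := fun t ht =>
    (hx t ht).continuousAt.continuousWithinAt
  have hgcont : ContinuousOn g (Set.Ici t₀) := by
    apply ContinuousOn.div
    · exact (hx'.mul continuousOn_id).sub hxcont
    · exact continuousOn_id.pow 2
    · intro s hs
      have : (0:ℝ) < s := lt_of_lt_of_le ht₀pos hs
      positivity
  have hderiv : ∀ t ∈ Set.Ici t₀, HasDerivAt (fun s => x s / s) (g t) t := by
    intro t ht
    have htpos : 0 < t := lt_of_lt_of_le ht₀pos ht
    have h := (hx t ht).div (hasDerivAt_id t) (ne_of_gt htpos)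
    exact h.congr_deriv (by simp [hg_def])
  have hgint : IntegrableOn g (Set.Ioi t₀) := by
    have hmeas : AEStronglyMeasurable g (volume.restrict (Set.Ioi t₀)) :=
      (hgcont.mono (Set.Ioi_subset_Ici le_rfl)).aestronglyMeasurable measurableSet_Ioi
    have hbound : IntegrableOn (fun s : ℝ => U * s ^ (-2:ℝ)) (Set.Ioi t₀) :=
      (integrableOn_Ioi_rpow_of_lt (by norm_num) ht₀pos).const_mul U
    refine hbound.mono' hmeas ?_
    filter_upwards [ae_restrict_mem measurableSet_Ioi] with s hs
    have hspos : 0 < s := lt_trans ht₀pos hs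
    have h1 : |x' s * s - x s| ≤ U := by
      have := hU s (Set.mem_Ici.mpr (le_of_lt hs))
      rwa [mul_comm] at this
    have hrpow : s ^ (-2:ℝ) = (s ^ 2)⁻¹ := by
      rw [Real.rpow_neg hspos.le, show (2:ℝ) = ((2:ℕ):ℝ) by norm_num,
        Real.rpow_natCast]
    have hs2 : (0:ℝ) < s ^ 2 := by positivity
    have : ‖g s‖ = |x' s * s - x s| / s ^ 2 := by
      rw [hg_def]
      simp [abs_div, abs_of_pos hs2]
    rw [this, hrpow, div_eq_mul_inv]
    exact mul_le_mul_of_nonneg_right h1 (by positivity)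
  have hFTC : ∀ t ∈ Set.Ici t₀, x t / t - x t₀ / t₀ = ∫ s in t₀..t, g s := by
    intro t ht
    have hsub : Set.uIcc t₀ t ⊆ Set.Ici t₀ := by
      rw [Set.uIcc_of_le ht]
      exact fun s hs => hs.1
    rw [intervalIntegral.integral_eq_sub_of_hasDerivAt
      (fun s hs => hderiv s (hsub hs))
      ((hgcont.mono hsub).intervalIntegrable)]
  have hI : Tendsto (fun t => ∫ s in t₀..t, g s) atTop
      (nhds (∫ s in Set.Ioi t₀, g s)) :=
    intervalIntegral_tendsto_integral_Ioi t₀ hgint tendsto_id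
  refine ⟨x t₀ / t₀ + ∫ s in Set.Ioi t₀, g s, ?_, ?_⟩
  · have h := (tendsto_const_nhds (x := x t₀ / t₀)).add hI
    refine h.congr' ?_
    filter_upwards [eventually_ge_atTop t₀] with t ht
    have := hFTC t ht
    linarith
  · have hv : Tendsto (fun t => x t / t) atTop
        (nhds (x t₀ / t₀ + ∫ s in Set.Ioi t₀, g s)) := by
      have h := (tendsto_const_nhds (x := x t₀ / t₀)).add hI
      refine h.congr' ?_
      filter_upwards [eventually_ge_atTop t₀] with t ht
      have := hFTC t ht
      linarith
    have hzero : Tendsto (fun t => (t * x' t - x t) / t) atTop (nhds 0) := by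
      apply squeeze_zero_norm' (a := fun t => U / t)
      · filter_upwards [eventually_ge_atTop t₀] with t ht
        have htpos : 0 < t := lt_of_lt_of_le ht₀pos ht
        rw [Real.norm_eq_abs, abs_div, abs_of_pos htpos]
        exact div_le_div_of_nonneg_right (hU t ht) htpos.le
      · exact Tendsto.div_atTop tendsto_const_nhds tendsto_id
    have h := hv.add hzero
    rw [add_zero] at h
    refine h.congr' ?_
    filter_upwards [eventually_ge_atTop t₀] with t ht
    have htpos : 0 < t := lt_of_lt_of_le ht₀pos ht
    field_simp
    ring
end

section
/- Let x : [t₀,∞) → ℝ (t₀ ≥ 1) be a C¹ function and define u(t) = t·x′(t) − x(t). If u(t) converges to a finite limit u∞ ∈ ℝ as t → +∞, then there exist x₁, x₂ ∈ ℝ with x₂ = −u∞ such that x(t) = x₁t + x₂ + o(1) and x′(t) = x₁ + o(t⁻¹) as t → +∞; i.e. x is asymptotically linear. -/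
open Filter Set Asymptotics

/-- Lemma 1 (ii): if `u(t) = t·x′(t) − x(t)` converges to a finite limit `u∞` as `t → +∞`,
then `x` is asymptotically linear: there are `x₁, x₂ ∈ ℝ` with `x₂ = −u∞` such that
`x(t) = x₁t + x₂ + o(1)` and `x′(t) = x₁ + o(t⁻¹)` as `t → +∞`. -/
theorem asymptotically_linear_of_u_tendsto
    (t₀ : ℝ) (ht₀ : 1 ≤ t₀) (x x' : ℝ → ℝ)
    (hx : ∀ t ∈ Set.Ici t₀, HasDerivAt x (x' t) t)
    (hx' : ContinuousOn x' (Set.Ici t₀))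
    (uinf : ℝ)
    (hu : Tendsto (fun t => t * x' t - x t) atTop (nhds uinf)) :
    ∃ x₁ x₂ : ℝ, x₂ = -uinf ∧
      Tendsto (fun t => x t - (x₁ * t + x₂)) atTop (nhds 0) ∧
      (fun t => x' t - x₁) =o[atTop] (fun t => t⁻¹) := by
  set u : ℝ → ℝ := fun t => t * x' t - x t with hu_def
  have hεlim : Tendsto (fun t => u t - uinf) atTop (nhds 0) := by
    simpa using hu.sub (tendsto_const_nhds (x := uinf))
  set h : ℝ → ℝ := fun t => (x t + uinf) * t⁻¹ with hh_def
  have hpos : ∀ t : ℝ, t₀ ≤ t → (0:ℝ) < t := fun t ht =>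
    lt_of_lt_of_le one_pos (ht₀.trans ht)
  -- derivative of h
  have hderiv : ∀ t, t₀ ≤ t → HasDerivAt h ((u t - uinf) / t ^ 2) t := by
    intro t ht
    have ht0 : t ≠ 0 := (hpos t ht).ne'
    have h1 : HasDerivAt (fun s => x s + uinf) (x' t) t := (hx t ht).add_const uinf
    have h2 : HasDerivAt (fun s : ℝ => s⁻¹) (-(t ^ 2)⁻¹) t := hasDerivAt_inv ht0
    have : HasDerivAt (fun s => (x s + uinf) * s⁻¹) _ t := h1.mul h2
    convert this using 1
    field_simp [hu_def]
    ring
  -- key bound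
  have hB : ∀ a, t₀ ≤ a → ∀ M, (∀ s, a ≤ s → |u s - uinf| ≤ M) →
      ∀ b, a ≤ b → |h b - h a| ≤ M * a⁻¹ := by
    intro a ha M hM b hab
    have hM0 : 0 ≤ M := le_trans (abs_nonneg _) (hM a le_rfl)
    have hint : interior (Set.Ici a) = Set.Ioi a := interior_Ici
    have hderivF : ∀ (σ : ℝ), σ = 1 ∨ σ = -1 → ∀ s ∈ Set.Ici a,
        HasDerivAt (fun s => -(M * s⁻¹) + σ * h s) ((M + σ * (u s - uinf)) / s ^ 2) s := by
      intro σ hσ s hs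
      have hs' : t₀ ≤ s := ha.trans hs
      have hs0 : s ≠ 0 := (hpos s hs').ne'
      have h1 : HasDerivAt (fun s : ℝ => -(M * s⁻¹)) (-(M * -(s ^ 2)⁻¹)) s :=
        (((hasDerivAt_inv hs0).const_mul M)).neg
      have h2 := (hderiv s hs').const_mul σ
      have : HasDerivAt (fun s => -(M * s⁻¹) + σ * h s) _ s := h1.add h2
      convert this using 1
      field_simp
    have hmono : ∀ (σ : ℝ), σ = 1 ∨ σ = -1 →
        MonotoneOn (fun s => -(M * s⁻¹) + σ * h s) (Set.Ici a) := by
      intro σ hσ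
      refine monotoneOn_of_hasDerivWithinAt_nonneg (convex_Ici a)
        (fun s hs => ((hderivF σ hσ s hs).continuousAt).continuousWithinAt)
        (f' := fun s => (M + σ * (u s - uinf)) / s ^ 2)
        (fun s hs => ((hderivF σ hσ s (le_of_lt (by simpa [hint] using hs))).hasDerivWithinAt))
        ?_
      intro s hs
      rw [hint] at hs
      have hs' : t₀ ≤ s := ha.trans hs.le
      have hbound := hM s hs.le
      have habs := abs_le.1 hbound
      apply div_nonneg _ (sq_nonneg s)
      rcases hσ with rfl | rfl
      · nlinarith [habs.1, habs.2]
      · nlinarith [habs.1, habs.2]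
    have ha0 : (0:ℝ) < a := hpos a ha
    have hb0 : (0:ℝ) < b := lt_of_lt_of_le ha0 hab
    have hbinv : (0:ℝ) ≤ M * b⁻¹ := mul_nonneg hM0 (inv_nonneg.2 hb0.le)
    have h1 := hmono 1 (Or.inl rfl) (Set.self_mem_Ici) hab hab
    have h2 := hmono (-1) (Or.inr rfl) (Set.self_mem_Ici) hab hab
    simp only [one_mul, neg_one_mul] at h1 h2
    rw [abs_le]
    constructor <;> nlinarith
  -- h is Cauchy at atTop
  have hcauchy : CauchySeq h := by
    rw [Metric.cauchySeq_iff']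
    intro δ hδ
    obtain ⟨a', ha'⟩ := (Metric.tendsto_atTop.1 hεlim) (δ/2) (by linarith)
    refine ⟨max a' t₀, ?_⟩
    intro n hn
    set N := max a' t₀
    have hNt₀ : t₀ ≤ N := le_max_right _ _
    have hbound : ∀ s, N ≤ s → |u s - uinf| ≤ δ/2 := by
      intro s hs
      have := ha' s ((le_max_left _ _).trans hs)
      rw [Real.dist_eq, sub_zero] at this
      exact this.le
    have := hB N hNt₀ (δ/2) hbound n hn
    have hN1 : (1:ℝ) ≤ N := ht₀.trans hNt₀
    have hNinv : N⁻¹ ≤ 1 := by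
      rw [inv_le_one_iff₀]; right; exact hN1
    rw [Real.dist_eq]
    calc |h n - h N| ≤ (δ/2) * N⁻¹ := this
      _ ≤ (δ/2) * 1 := by nlinarith
      _ < δ := by linarith
  obtain ⟨x₁, hx₁⟩ := cauchySeq_tendsto_of_complete hcauchy
  -- key: t * (h t - x₁) → 0
  have hkey : Tendsto (fun t => t * (h t - x₁)) atTop (nhds 0) := by
    rw [Metric.tendsto_atTop]
    intro δ hδ
    obtain ⟨a', ha'⟩ := (Metric.tendsto_atTop.1 hεlim) (δ/2) (by linarith)
    refine ⟨max a' t₀, ?_⟩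
    intro t ht
    have htt₀ : t₀ ≤ t := (le_max_right _ _).trans ht
    have ht0 : (0:ℝ) < t := hpos t htt₀
    have hbound : ∀ s, t ≤ s → |u s - uinf| ≤ δ/2 := by
      intro s hs
      have := ha' s (((le_max_left a' t₀).trans ht).trans hs)
      rw [Real.dist_eq, sub_zero] at this
      exact this.le
    have hlim2 : Tendsto (fun b => |h b - h t|) atTop (nhds |x₁ - h t|) :=
      ((hx₁.sub_const (h t)).abs)
    have hle : |x₁ - h t| ≤ (δ/2) * t⁻¹ := by
      refine le_of_tendsto hlim2 ?_
      filter_upwards [eventually_ge_atTop t] with b hb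
      exact hB t htt₀ (δ/2) hbound b hb
    rw [Real.dist_eq, sub_zero, abs_mul, abs_of_pos ht0]
    have : |h t - x₁| = |x₁ - h t| := abs_sub_comm _ _
    rw [this]
    calc t * |x₁ - h t| ≤ t * ((δ/2) * t⁻¹) := by
          exact mul_le_mul_of_nonneg_left hle ht0.le
      _ = δ/2 := by field_simp
      _ < δ := by linarith
  refine ⟨x₁, -uinf, rfl, ?_, ?_⟩
  · refine hkey.congr' ?_
    filter_upwards [eventually_ge_atTop t₀] with t ht
    have ht0 : t ≠ 0 := (hpos t ht).ne'
    simp only [hh_def]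
    field_simp
    ring
  · have h2 : Tendsto (fun t => (x' t - x₁) * t) atTop (nhds 0) := by
      have := hεlim.add hkey
      rw [add_zero] at this
      refine this.congr' ?_
      filter_upwards [eventually_ge_atTop t₀] with t ht
      have ht0 : t ≠ 0 := (hpos t ht).ne'
      simp only [hh_def, hu_def]
      field_simp
      ring
    rw [isLittleO_iff_tendsto']
    · refine h2.congr' ?_
      filter_upwards [eventually_ge_atTop t₀] with t ht
      have ht0 : t ≠ 0 := (hpos t ht).ne'
      rw [div_eq_mul_inv, inv_inv]
    · filter_upwards [eventually_ge_atTop t₀] with t ht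
      intro habs
      exact absurd habs (inv_ne_zero (hpos t ht).ne')
end

section
/- Let n ≥ 1 be an integer and consider the Emden–Fowler type equation x″ + A(t)x^{2n−1} = 0 for t ≥ t₀ ≥ 1, where A : [t₀,∞) → ℝ is C¹ with A(t) ≥ 0 and (2n+2)A(t) + t·A′(t) ≤ 0 for all t ≥ t₀. Then every solution x of the equation is defined on [t₀,∞) and satisfies either x(t) = o(t) as t → +∞, or x(t) = x₁t + x₂ + o(1) with x₁ ≠ 0 as t → +∞. -/
open Filter Set Asymptotics

open MeasureTheory intervalIntegral
open scoped Topology NNReal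

/-- bound on difference of powers on a ball -/
lemma EF.abs_pow_sub_pow_le (m : ℕ) {a b M : ℝ} (ha : |a| ≤ M) (hb : |b| ≤ M) :
    |a ^ m - b ^ m| ≤ m * M ^ (m - 1) * |a - b| := by
  have hM : 0 ≤ M := le_trans (abs_nonneg a) ha
  have h := geom_sum₂_mul a b m
  calc |a ^ m - b ^ m| = |(∑ i ∈ Finset.range m, a ^ i * b ^ (m - 1 - i)) * (a - b)| := by
        rw [h]
    _ = |∑ i ∈ Finset.range m, a ^ i * b ^ (m - 1 - i)| * |a - b| := abs_mul _ _
    _ ≤ (m * M ^ (m - 1)) * |a - b| := by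
        apply mul_le_mul_of_nonneg_right _ (abs_nonneg _)
        calc |∑ i ∈ Finset.range m, a ^ i * b ^ (m - 1 - i)|
            ≤ ∑ i ∈ Finset.range m, |a ^ i * b ^ (m - 1 - i)| :=
              Finset.abs_sum_le_sum_abs _ _
          _ ≤ ∑ _i ∈ Finset.range m, M ^ (m - 1) := by
              apply Finset.sum_le_sum
              intro i hi
              rw [Finset.mem_range] at hi
              have : |a ^ i * b ^ (m - 1 - i)| = |a| ^ i * |b| ^ (m - 1 - i) := by
                rw [abs_mul, abs_pow, abs_pow]
              rw [this]
              have h1 : |a| ^ i * |b| ^ (m - 1 - i) ≤ M ^ i * M ^ (m - 1 - i) := by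
                apply mul_le_mul (pow_le_pow_left₀ (abs_nonneg a) ha i)
                  (pow_le_pow_left₀ (abs_nonneg b) hb _) (by positivity) (by positivity)
              refine h1.trans_eq ?_
              rw [← pow_add]
              congr 1
              omega
          _ = m * M ^ (m - 1) := by simp [Finset.sum_const, mul_comm]

/-- Existence of a left limit at `T` for a function with bounded derivative on `[a, T)`. -/
lemma EF.exists_tendsto_left (a T B : ℝ) (haT : a < T) (g g' : ℝ → ℝ)
    (hg : ∀ t ∈ Ico a T, HasDerivAt g (g' t) t)
    (hg'c : ContinuousOn g' (Ico a T))
    (hB : ∀ t ∈ Ico a T, |g' t| ≤ B) :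
    ∃ L, Tendsto g (𝓝[<] T) (𝓝 L) := by
  have hInt : IntegrableOn g' (Icc a T) := by
    rw [integrableOn_Icc_iff_integrableOn_Ioo]
    have hsub : Ioo a T ⊆ Ico a T := Ioo_subset_Ico_self
    exact ⟨(hg'c.mono hsub).aestronglyMeasurable measurableSet_Ioo,
      HasFiniteIntegral.restrict_of_bounded (C := B) (by simp)
        (ae_restrict_of_forall_mem measurableSet_Ioo fun t ht =>
          (Real.norm_eq_abs _ ▸ hB t (hsub ht)))⟩
  set P : ℝ → ℝ := fun u => ∫ s in Ioc a u, g' s with hP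
  have hPc : ContinuousOn P (Icc a T) := continuousOn_primitive hInt
  refine ⟨g a + P T, ?_⟩
  have h1 : Tendsto P (𝓝[<] T) (𝓝 (P T)) := by
    have h2 : Tendsto P (𝓝[Icc a T] T) (𝓝 (P T)) :=
      (hPc T (right_mem_Icc.2 haT.le)).tendsto
    have h3 : 𝓝[<] T = 𝓝[Iio T ∩ Ioi a] T := nhdsWithin_restrict' _ (Ioi_mem_nhds haT)
    rw [h3]
    exact h2.mono_left (nhdsWithin_mono _ (fun u hu => ⟨hu.2.le, hu.1.le⟩))
  have h4 : Tendsto (fun u => g a + P u) (𝓝[<] T) (𝓝 (g a + P T)) :=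
    tendsto_const_nhds.add h1
  refine h4.congr' ?_
  have : Iio T ∩ Ioi a ∈ 𝓝[<] T := inter_mem_nhdsWithin _ (Ioi_mem_nhds haT)
  filter_upwards [this] with u hu
  have hu' : u ∈ Ico a T := ⟨hu.2.le, hu.1⟩
  have hftc : ∫ s in a..u, g' s = g u - g a := by
    apply intervalIntegral.integral_eq_sub_of_hasDerivAt
    · intro t ht
      rw [uIcc_of_le hu'.1] at ht
      exact hg t ⟨ht.1, lt_of_le_of_lt ht.2 hu.1⟩
    · exact (hInt.mono_set (by rw [uIcc_of_le hu'.1]; exact Icc_subset_Icc le_rfl hu.1.le)).intervalIntegrable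
  rw [intervalIntegral.integral_of_le hu'.1] at hftc
  simp only [P]
  rw [hftc]
  ring

/-- Energy estimate: the energy `E = n x'² + A x^{2n}` is nonincreasing. -/
lemma EF.energy_le (n : ℕ) (hn : 1 ≤ n) (t₀ T : ℝ) (ht₀ : 1 ≤ t₀)
    (A A' x x' x'' : ℝ → ℝ)
    (hA : ∀ t ∈ Ico t₀ T, HasDerivWithinAt A (A' t) (Ici t₀) t)
    (hA_nonneg : ∀ t ∈ Ico t₀ T, 0 ≤ A t)
    (hcond : ∀ t ∈ Ico t₀ T, (2 * n + 2) * A t + t * A' t ≤ 0)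
    (hx : ∀ t ∈ Ico t₀ T, HasDerivAt x (x' t) t)
    (hx' : ∀ t ∈ Ico t₀ T, HasDerivAt x' (x'' t) t)
    (heq : ∀ t ∈ Ico t₀ T, x'' t + A t * x t ^ (2 * n - 1) = 0) :
    ∀ t ∈ Ico t₀ T,
      (n : ℝ) * x' t ^ 2 + A t * x t ^ (2 * n) ≤ (n : ℝ) * x' t₀ ^ 2 + A t₀ * x t₀ ^ (2 * n) := by
  intro t ht
  rcases eq_or_lt_of_le ht.1 with rfl | htt₀
  · exact le_refl _
  set E : ℝ → ℝ := fun u => (n : ℝ) * x' u ^ 2 + A u * x u ^ (2 * n) with hE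
  have hsub : Icc t₀ t ⊆ Ico t₀ T := fun u hu => ⟨hu.1, lt_of_le_of_lt hu.2 ht.2⟩
  have hEd : ∀ s ∈ Ioo t₀ t, HasDerivAt E (A' s * x s ^ (2 * n)) s := by
    intro s hs
    have hsm : s ∈ Ico t₀ T := hsub ⟨hs.1.le, hs.2.le⟩
    have hAd : HasDerivAt A (A' s) s :=
      (hA s hsm).hasDerivAt (Ici_mem_nhds hs.1)
    have h1 : HasDerivAt E ((n : ℝ) * ((2 : ℕ) * x' s ^ (2 - 1) * x'' s) +
        (A' s * x s ^ (2 * n) + A s * ((2 * n : ℕ) * x s ^ (2 * n - 1) * x' s))) s :=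
      ((hx' s hsm).pow 2 |>.const_mul (n : ℝ)).add
        (hAd.mul ((hx s hsm).pow (2 * n)))
    have h2 : (n : ℝ) * ((2 : ℕ) * x' s ^ (2 - 1) * x'' s) +
        (A' s * x s ^ (2 * n) + A s * ((2 * n : ℕ) * x s ^ (2 * n - 1) * x' s))
        = A' s * x s ^ (2 * n) := by
      have hxx : x'' s = -(A s * x s ^ (2 * n - 1)) := by
        have := heq s hsm; linarith
      rw [hxx]
      push_cast
      ring
    rwa [h2] at h1
  have hanti : AntitoneOn E (Icc t₀ t) := by
    apply antitoneOn_of_deriv_nonpos (convex_Icc t₀ t)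
    · intro u hu
      have hum := hsub hu
      have hc1 : ContinuousWithinAt x' (Icc t₀ t) u := (hx' u hum).continuousAt.continuousWithinAt
      have hc2 : ContinuousWithinAt x (Icc t₀ t) u := (hx u hum).continuousAt.continuousWithinAt
      have hc3 : ContinuousWithinAt A (Icc t₀ t) u :=
        ((hA u hum).continuousWithinAt).mono (fun v hv => hv.1)
      exact ((hc1.pow 2).const_mul (n : ℝ)).add (hc3.mul (hc2.pow (2 * n)))
    · intro u hu
      rw [interior_Icc] at hu
      exact (hEd u hu).differentiableAt.differentiableWithinAt
    · intro u hu
      rw [interior_Icc] at hu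
      rw [(hEd u hu).deriv]
      have hum : u ∈ Ico t₀ T := hsub ⟨hu.1.le, hu.2.le⟩
      have hA'le : A' u ≤ 0 := by
        have h1 := hcond u hum
        have h2 := hA_nonneg u hum
        have hu1 : (1 : ℝ) ≤ u := le_trans ht₀ hum.1
        nlinarith
      exact mul_nonpos_of_nonpos_of_nonneg hA'le (Even.pow_nonneg (even_two_mul n) _)
  exact hanti ⟨le_refl t₀, htt₀.le⟩ ⟨htt₀.le, le_refl t⟩ htt₀.le

/-- decay of `A`: `A t * t^(2n+2)` is nonincreasing on `[t₀, ∞)`. -/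
lemma EF.A_decay (n : ℕ) (t₀ : ℝ) (ht₀ : 1 ≤ t₀) (A A' : ℝ → ℝ)
    (hA : ∀ t ∈ Ici t₀, HasDerivWithinAt A (A' t) (Ici t₀) t)
    (hcond : ∀ t ∈ Ici t₀, (2 * n + 2) * A t + t * A' t ≤ 0) :
    ∀ t ∈ Ici t₀, A t * t ^ (2 * n + 2) ≤ A t₀ * t₀ ^ (2 * n + 2) := by
  intro t ht
  rcases eq_or_lt_of_le (Set.mem_Ici.mp ht) with rfl | htt₀
  · exact le_rfl
  set g : ℝ → ℝ := fun u => A u * u ^ (2 * n + 2) with hg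
  have hgd : ∀ s ∈ Ioo t₀ t, HasDerivAt g
      (A' s * s ^ (2 * n + 2) + A s * ((2 * n + 2 : ℕ) * s ^ (2 * n + 2 - 1) * 1)) s := by
    intro s hs
    have hsm : s ∈ Ici t₀ := Set.mem_Ici.mpr (le_of_lt hs.1)
    have hAd : HasDerivAt A (A' s) s := (hA s hsm).hasDerivAt (Ici_mem_nhds hs.1)
    exact hAd.mul ((hasDerivAt_id s).pow (2 * n + 2))
  have hanti : AntitoneOn g (Icc t₀ t) := by
    apply antitoneOn_of_deriv_nonpos (convex_Icc t₀ t)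
    · intro u hu
      exact (((hA u hu.1).continuousWithinAt).mono (fun v hv => hv.1)).mul
        ((continuous_pow (2 * n + 2)).continuousWithinAt)
    · intro u hu
      rw [interior_Icc] at hu
      exact (hgd u hu).differentiableAt.differentiableWithinAt
    · intro u hu
      rw [interior_Icc] at hu
      rw [(hgd u hu).deriv]
      have hu0 : (0 : ℝ) < u := lt_of_lt_of_le one_pos (le_trans ht₀ hu.1.le)
      have hc := hcond u (Set.mem_Ici.mpr (le_of_lt hu.1))
      have hp : (0 : ℝ) ≤ u ^ (2 * n + 1) := pow_nonneg hu0.le _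
      have hps : u ^ (2 * n + 2) = u ^ (2 * n + 1) * u := by
        rw [← pow_succ]
      have hps2 : u ^ (2 * n + 2 - 1) = u ^ (2 * n + 1) := by norm_num
      have key : A' u * u ^ (2 * n + 2) + A u * ((2 * n + 2 : ℕ) * u ^ (2 * n + 2 - 1) * 1)
          = u ^ (2 * n + 1) * ((2 * n + 2) * A u + u * A' u) := by
        rw [hps, hps2]
        push_cast
        ring
      rw [key]
      exact mul_nonpos_of_nonneg_of_nonpos hp hc
  exact hanti ⟨le_rfl, htt₀.le⟩ ⟨htt₀.le, le_rfl⟩ htt₀.le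

/-- Extension of a solution beyond a finite time `T`, given a bound on `x'`. -/
lemma EF.extend (n : ℕ) (hn : 1 ≤ n) (t₀ T : ℝ) (ht₀ : 1 ≤ t₀) (hT : t₀ < T)
    (A A' : ℝ → ℝ)
    (hA : ∀ t ∈ Ici t₀, HasDerivWithinAt A (A' t) (Ici t₀) t)
    (x x' x'' : ℝ → ℝ)
    (hx : ∀ t ∈ Ico t₀ T, HasDerivAt x (x' t) t)
    (hx' : ∀ t ∈ Ico t₀ T, HasDerivAt x' (x'' t) t)
    (heq : ∀ t ∈ Ico t₀ T, x'' t + A t * x t ^ (2 * n - 1) = 0)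
    (hB : ∃ B, ∀ t ∈ Ico t₀ T, |x' t| ≤ B) :
    ∃ (ε : ℝ) (y yd ydd : ℝ → ℝ), 0 < ε ∧
      (∀ t ∈ Ico t₀ (T + ε), HasDerivAt y (yd t) t) ∧
      (∀ t ∈ Ico t₀ (T + ε), HasDerivAt yd (ydd t) t) ∧
      (∀ t ∈ Ico t₀ (T + ε), ydd t + A t * y t ^ (2 * n - 1) = 0) ∧
      (∀ t ∈ Ico t₀ T, y t = x t) := by
  obtain ⟨B, hB⟩ := hB
  set m := 2 * n - 1 with hm
  have ht₀T : t₀ ∈ Ico t₀ T := ⟨le_rfl, hT⟩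
  have hB0 : 0 ≤ B := le_trans (abs_nonneg _) (hB t₀ ht₀T)
  have hAc : ContinuousOn A (Ici t₀) := fun t ht => (hA t ht).continuousWithinAt
  -- bound on x
  have hxb : ∀ t ∈ Ico t₀ T, |x t| ≤ |x t₀| + B * (T - t₀) := by
    intro t ht
    have key : ‖x t - x t₀‖ ≤ B * (t - t₀) := by
      apply norm_image_sub_le_of_norm_deriv_le_segment'
        (f' := x') (fun u hu => (hx u ⟨hu.1, lt_of_le_of_lt hu.2 ht.2⟩).hasDerivWithinAt)
        (fun u hu => (Real.norm_eq_abs _ ▸ hB u ⟨hu.1, lt_of_lt_of_le hu.2 ht.2.le⟩))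
      exact ⟨ht.1, le_rfl⟩
    have h2 : B * (t - t₀) ≤ B * (T - t₀) := by nlinarith [ht.2]
    rw [Real.norm_eq_abs] at key
    have h3 : |x t| - |x t₀| ≤ |x t - x t₀| := abs_sub_abs_le_abs_sub _ _
    linarith
  set Mx := |x t₀| + B * (T - t₀) with hMx
  have hMx0 : 0 ≤ Mx := le_trans (abs_nonneg _) (le_add_of_nonneg_right (by nlinarith))
  -- bound on A on Icc t₀ (T+1)
  obtain ⟨Ka, hKa⟩ : ∃ Ka, ∀ t ∈ Icc t₀ (T + 1), ‖A t‖ ≤ Ka :=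
    (isCompact_Icc).exists_bound_of_continuousOn (hAc.mono (fun u hu => hu.1))
  have hKa0 : 0 ≤ Ka := le_trans (norm_nonneg _) (hKa t₀ ⟨le_rfl, by linarith⟩)
  -- bound on x''
  have hx''b : ∀ t ∈ Ico t₀ T, |x'' t| ≤ Ka * Mx ^ m := by
    intro t ht
    have h1 : x'' t = -(A t * x t ^ m) := by have := heq t ht; linarith
    rw [h1, abs_neg, abs_mul, abs_pow]
    have h2 : |A t| ≤ Ka := Real.norm_eq_abs (A t) ▸ hKa t ⟨ht.1, by linarith [ht.2]⟩
    have h3 : |x t| ^ m ≤ Mx ^ m := pow_le_pow_left₀ (abs_nonneg _) (hxb t ht) m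
    exact mul_le_mul h2 h3 (by positivity) hKa0
  -- continuity
  have hxc : ContinuousOn x (Ico t₀ T) := fun t ht => (hx t ht).continuousAt.continuousWithinAt
  have hx'c : ContinuousOn x' (Ico t₀ T) := fun t ht => (hx' t ht).continuousAt.continuousWithinAt
  have hx''c : ContinuousOn x'' (Ico t₀ T) := by
    have : ContinuousOn (fun t => -(A t * x t ^ m)) (Ico t₀ T) :=
      ((hAc.mono (fun u hu => hu.1)).mul (hxc.pow m)).neg
    exact this.congr (fun t ht => by have := heq t ht; linarith)
  -- limits at T
  obtain ⟨xT, hxT⟩ := EF.exists_tendsto_left t₀ T B hT x x' hx hx'c hB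
  obtain ⟨vT, hvT⟩ := EF.exists_tendsto_left t₀ T (Ka * Mx ^ m) hT x' x'' hx' hx''c hx''b
  -- Picard-Lindelöf setup
  set p₀ : ℝ × ℝ := (xT, vT) with hp₀
  set Mb : ℝ := ‖p₀‖ + 1 with hMb
  have hMb0 : 0 < Mb := by positivity
  set C : ℝ := max (Mb + Ka * Mb ^ m) 1 with hC
  have hC1 : (1 : ℝ) ≤ C := le_max_right _ _
  have hC0 : (0 : ℝ) < C := lt_of_lt_of_le one_pos hC1
  set ε : ℝ := 1 / C with hε
  have hε0 : 0 < ε := by positivity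
  have hε1 : ε ≤ 1 := by
    rw [hε]; rw [div_le_one hC0]; exact hC1
  set Lr : ℝ := max 1 (Ka * (m * Mb ^ (m - 1))) with hLr
  have hLr0 : 0 ≤ Lr := le_trans zero_le_one (le_max_left _ _)
  set L : ℝ≥0 := Real.toNNReal Lr with hL
  set v : ℝ → ℝ × ℝ → ℝ × ℝ := fun t p => (p.2, -(A t * p.1 ^ m)) with hv
  have hIccsub : Icc T (T + ε) ⊆ Icc t₀ (T + 1) :=
    Icc_subset_Icc hT.le (by linarith)
  have hball : ∀ p : ℝ × ℝ, p ∈ Metric.closedBall p₀ 1 → |p.1| ≤ Mb ∧ |p.2| ≤ Mb := by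
    intro p hp
    rw [Metric.mem_closedBall, Prod.dist_eq] at hp
    have h1 : dist p.1 p₀.1 ≤ 1 := le_trans (le_max_left _ _) hp
    have h2 : dist p.2 p₀.2 ≤ 1 := le_trans (le_max_right _ _) hp
    rw [Real.dist_eq] at h1 h2
    constructor
    · have : |p.1| - |p₀.1| ≤ |p.1 - p₀.1| := abs_sub_abs_le_abs_sub _ _
      have h3 : |p₀.1| ≤ ‖p₀‖ := norm_fst_le p₀
      rw [hMb]; linarith
    · have : |p.2| - |p₀.2| ≤ |p.2 - p₀.2| := abs_sub_abs_le_abs_sub _ _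
      have h3 : |p₀.2| ≤ ‖p₀‖ := norm_snd_le p₀
      rw [hMb]; linarith
  have hKab : ∀ t ∈ Icc T (T + ε), |A t| ≤ Ka := fun t ht =>
    Real.norm_eq_abs (A t) ▸ hKa t (hIccsub ht)
  have hpl : IsPicardLindelof v (tmin := T) (tmax := T + ε) ⟨T, le_rfl, by linarith⟩ p₀ 1 0
      (Real.toNNReal C) L := by
    constructor
    · -- Lipschitz
      intro t ht
      apply LipschitzOnWith.of_dist_le_mul
      intro p hp q hq
      rw [Prod.dist_eq, Prod.dist_eq]
      have hLL : (L : ℝ) = Lr := Real.coe_toNNReal _ hLr0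
      rw [hLL]
      have hd1 : dist p.1 q.1 ≤ max (dist p.1 q.1) (dist p.2 q.2) := le_max_left _ _
      have hd2 : dist p.2 q.2 ≤ max (dist p.1 q.1) (dist p.2 q.2) := le_max_right _ _
      apply max_le
      · calc dist (v t p).1 (v t q).1 = dist p.2 q.2 := rfl
          _ ≤ 1 * max (dist p.1 q.1) (dist p.2 q.2) := by rw [one_mul]; exact hd2
          _ ≤ Lr * max (dist p.1 q.1) (dist p.2 q.2) := by
              apply mul_le_mul_of_nonneg_right (le_max_left _ _) (le_trans dist_nonneg hd1)
      · have hvv : dist (v t p).2 (v t q).2 = |A t| * |p.1 ^ m - q.1 ^ m| := by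
          simp only [hv, Real.dist_eq]
          rw [show -(A t * p.1 ^ m) - -(A t * q.1 ^ m) = -(A t * (p.1 ^ m - q.1 ^ m)) by ring,
            abs_neg, abs_mul]
        rw [hvv]
        have hP := EF.abs_pow_sub_pow_le m (hball p hp).1 (hball q hq).1
        calc |A t| * |p.1 ^ m - q.1 ^ m| ≤ Ka * (m * Mb ^ (m - 1) * |p.1 - q.1|) := by
              apply mul_le_mul (hKab t ht) hP (abs_nonneg _) hKa0
          _ = Ka * (m * Mb ^ (m - 1)) * dist p.1 q.1 := by rw [Real.dist_eq]; ring
          _ ≤ Lr * max (dist p.1 q.1) (dist p.2 q.2) := by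
              apply mul_le_mul (le_max_right _ _) hd1 dist_nonneg hLr0
    · -- continuity in t
      intro p _
      apply ContinuousOn.prodMk continuousOn_const
      exact (((hAc.mono (fun u hu => (hIccsub hu).1)).mul continuousOn_const).neg)
    · -- norm bound
      intro t ht p hp
      rw [Real.coe_toNNReal _ hC0.le]
      have h1 : ‖v t p‖ = max |p.2| (|A t| * |p.1| ^ m) := by
        rw [Prod.norm_def]
        simp [hv, Real.norm_eq_abs, abs_mul, abs_pow]
      rw [h1]
      have h2 := hball p hp
      apply max_le
      · refine le_trans h2.2 (le_trans ?_ (le_max_left _ _))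
        nlinarith [pow_nonneg hMb0.le m, mul_le_mul_of_nonneg_left (pow_le_pow_left₀ (abs_nonneg p.1) h2.1 m) hKa0]
      · refine le_trans ?_ (le_max_left _ _)
        have h3 : |A t| * |p.1| ^ m ≤ Ka * Mb ^ m := by
          apply mul_le_mul (hKab t ht) (pow_le_pow_left₀ (abs_nonneg _) h2.1 m) (by positivity) hKa0
        linarith
    · -- C * ε ≤ R
      have : max (T + ε - T) (T - T) = ε := by
        rw [max_eq_left (by linarith)]; ring
      simp only [Real.coe_toNNReal _ hC0.le, NNReal.coe_one, NNReal.coe_zero, sub_zero, this]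
      rw [hε, mul_one_div, div_self (ne_of_gt hC0)]
  obtain ⟨f, hf0, hfd⟩ := hpl.exists_eq_forall_mem_Icc_hasDerivWithinAt₀
  replace hf0 : f T = p₀ := hf0
  set z : ℝ → ℝ := fun u => (f u).1 with hzdef
  set w : ℝ → ℝ := fun u => (f u).2 with hwdef
  have hz : ∀ u ∈ Icc T (T + ε), HasDerivWithinAt z (w u) (Icc T (T + ε)) u := by
    intro u hu
    exact (ContinuousLinearMap.fst ℝ ℝ ℝ).hasFDerivAt.comp_hasDerivWithinAt u (hfd u hu)
  have hw : ∀ u ∈ Icc T (T + ε), HasDerivWithinAt w (-(A u * z u ^ m)) (Icc T (T + ε)) u := by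
    intro u hu
    exact (ContinuousLinearMap.snd ℝ ℝ ℝ).hasFDerivAt.comp_hasDerivWithinAt u (hfd u hu)
  have hzT : z T = xT := by rw [hzdef]; simp [hf0, hp₀]
  have hwT : w T = vT := by rw [hwdef]; simp [hf0, hp₀]
  set y : ℝ → ℝ := fun u => if u < T then x u else z u with hydef
  set yd : ℝ → ℝ := fun u => if u < T then x' u else w u with hyddef
  set ydd : ℝ → ℝ := fun u => -(A u * y u ^ m) with hydddef
  have hyT : y T = xT := by rw [hydef]; simp [hzT]
  have hydT : yd T = vT := by rw [hyddef]; simp [hwT]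
  have hyx : ∀ u ∈ Iio T, y u = x u := fun u hu => if_pos hu
  have hydx' : ∀ u ∈ Iio T, yd u = x' u := fun u hu => if_pos hu
  have hyz : ∀ u ∈ Ici T, y u = z u := fun u hu => if_neg (not_lt.2 hu)
  have hydw : ∀ u ∈ Ici T, yd u = w u := fun u hu => if_neg (not_lt.2 hu)
  have hIoo : Ioo t₀ T ∈ 𝓝[<] T := Ioo_mem_nhdsLT_of_mem ⟨hT, le_rfl⟩
  have hTTε : T < T + ε := by linarith
  have hyd_at : ∀ u ∈ Ioo t₀ T, HasDerivAt y (x' u) u := by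
    intro u hu
    exact (hx u ⟨hu.1.le, hu.2⟩).congr_of_eventuallyEq
      (Filter.eventuallyEq_of_mem (Iio_mem_nhds hu.2) hyx)
  have hydd_at : ∀ u ∈ Ioo t₀ T, HasDerivAt yd (x'' u) u := by
    intro u hu
    exact (hx' u ⟨hu.1.le, hu.2⟩).congr_of_eventuallyEq
      (Filter.eventuallyEq_of_mem (Iio_mem_nhds hu.2) hydx')
  have hy_eq_x : y =ᶠ[𝓝[<] T] x :=
    Filter.eventuallyEq_of_mem self_mem_nhdsWithin hyx
  have hyd_eq_x' : yd =ᶠ[𝓝[<] T] x' :=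
    Filter.eventuallyEq_of_mem self_mem_nhdsWithin hydx'
  -- tendsto of A at T from the left
  have hAT : Tendsto A (𝓝[<] T) (𝓝 (A T)) := by
    have h1 : Tendsto A (𝓝[Ici t₀] T) (𝓝 (A T)) := (hAc T (le_of_lt hT)).tendsto
    have h2 : 𝓝[<] T = 𝓝[Iio T ∩ Ioi t₀] T := nhdsWithin_restrict' _ (Ioi_mem_nhds hT)
    rw [h2]
    exact h1.mono_left (nhdsWithin_mono _ (fun u hu => Set.mem_Ici.mpr hu.2.le))
  -- derivative of y at T
  have hyT_deriv : HasDerivAt y (yd T) T := by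
    rw [hydT]
    have hleft : HasDerivWithinAt y vT (Iic T) T := by
      apply hasDerivWithinAt_Iic_of_tendsto_deriv
        (fun u hu => (hyd_at u hu).differentiableAt.differentiableWithinAt)
        ?_ hIoo ?_
      · show Tendsto y (𝓝[Ioo t₀ T] T) (𝓝 (y T))
        rw [hyT]
        refine (hxT.mono_left (nhdsWithin_mono _ Ioo_subset_Iio_self)).congr' ?_
        filter_upwards [self_mem_nhdsWithin] with u hu using (hyx u (Ioo_subset_Iio_self hu)).symm
      · refine hvT.congr' ?_
        filter_upwards [hIoo] with u hu using ((hyd_at u hu).deriv).symm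
    have hright : HasDerivWithinAt y vT (Ici T) T := by
      have h1 : HasDerivWithinAt z vT (Icc T (T + ε)) T := hwT ▸ hz T ⟨le_rfl, hTTε.le⟩
      have h2 : HasDerivWithinAt z vT (Ici T) T :=
        h1.mono_of_mem_nhdsWithin (Icc_mem_nhdsGE_of_mem (left_mem_Ico.2 hTTε))
      exact h2.congr hyz (hyz T self_mem_Ici)
    have := hleft.union hright
    rw [Iic_union_Ici] at this
    exact this.hasDerivAt univ_mem
  -- derivative of yd at T
  have hyddT : ydd T = -(A T * xT ^ m) := by rw [hydddef]; simp [hyT]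
  have hx''tendsto : Tendsto x'' (𝓝[<] T) (𝓝 (ydd T)) := by
    rw [hyddT]
    have h1 : Tendsto (fun u => -(A u * x u ^ m)) (𝓝[<] T) (𝓝 (-(A T * xT ^ m))) :=
      (hAT.mul (hxT.pow m)).neg
    refine h1.congr' ?_
    filter_upwards [hIoo] with u hu
    have := heq u ⟨hu.1.le, hu.2⟩; linarith
  have hydT_deriv : HasDerivAt yd (ydd T) T := by
    have hleft : HasDerivWithinAt yd (ydd T) (Iic T) T := by
      apply hasDerivWithinAt_Iic_of_tendsto_deriv
        (fun u hu => (hydd_at u hu).differentiableAt.differentiableWithinAt)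
        ?_ hIoo ?_
      · show Tendsto yd (𝓝[Ioo t₀ T] T) (𝓝 (yd T))
        rw [hydT]
        refine (hvT.mono_left (nhdsWithin_mono _ Ioo_subset_Iio_self)).congr' ?_
        filter_upwards [self_mem_nhdsWithin] with u hu using (hydx' u (Ioo_subset_Iio_self hu)).symm
      · refine hx''tendsto.congr' ?_
        filter_upwards [hIoo] with u hu using ((hydd_at u hu).deriv).symm
    have hright : HasDerivWithinAt yd (ydd T) (Ici T) T := by
      have h1 : HasDerivWithinAt w (ydd T) (Icc T (T + ε)) T := by
        have := hw T ⟨le_rfl, hTTε.le⟩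
        rwa [show -(A T * z T ^ m) = ydd T by rw [hyddT, hzT]] at this
      have h2 : HasDerivWithinAt w (ydd T) (Ici T) T :=
        h1.mono_of_mem_nhdsWithin (Icc_mem_nhdsGE_of_mem (left_mem_Ico.2 hTTε))
      exact h2.congr hydw (hydw T self_mem_Ici)
    have := hleft.union hright
    rw [Iic_union_Ici] at this
    exact this.hasDerivAt univ_mem
  refine ⟨ε, y, yd, ydd, hε0, ?_, ?_, ?_, fun t ht => hyx t ht.2⟩
  · intro t ht
    rcases lt_trichotomy t T with h | rfl | h
    · have h1 : HasDerivAt y (x' t) t := (hx t ⟨ht.1, h⟩).congr_of_eventuallyEq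
        (Filter.eventuallyEq_of_mem (Iio_mem_nhds h) hyx)
      rwa [show yd t = x' t from hydx' t h]
    · exact hyT_deriv
    · have htm : t ∈ Icc T (T + ε) := ⟨h.le, ht.2.le⟩
      have hzt : HasDerivAt z (w t) t := (hz t htm).hasDerivAt (Icc_mem_nhds h ht.2)
      have h2 : HasDerivAt y (w t) t := hzt.congr_of_eventuallyEq
        (Filter.eventuallyEq_of_mem (Ioi_mem_nhds h) (fun v hv => hyz v (Set.mem_Ici.mpr (le_of_lt hv))))
      rwa [show yd t = w t from hydw t h.le] 
  · intro t ht
    rcases lt_trichotomy t T with h | rfl | h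
    · have h1 : HasDerivAt yd (x'' t) t := (hx' t ⟨ht.1, h⟩).congr_of_eventuallyEq
        (Filter.eventuallyEq_of_mem (Iio_mem_nhds h) hydx')
      rwa [show ydd t = x'' t by
        rw [hydddef]
        have hyx' : y t = x t := hyx t h
        have := heq t ⟨ht.1, h⟩
        simp only [hyx']
        linarith]
    · exact hydT_deriv
    · have htm : t ∈ Icc T (T + ε) := ⟨h.le, ht.2.le⟩
      have hwt : HasDerivAt w (-(A t * z t ^ m)) t := (hw t htm).hasDerivAt (Icc_mem_nhds h ht.2)
      have h2 : HasDerivAt yd (-(A t * z t ^ m)) t := hwt.congr_of_eventuallyEq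
        (Filter.eventuallyEq_of_mem (Ioi_mem_nhds h) (fun v hv => hydw v (Set.mem_Ici.mpr (le_of_lt hv))))
      rwa [show ydd t = -(A t * z t ^ m) by rw [hydddef]; simp only [hyz t h.le]]
  · intro t ht
    simp only [hydddef]
    ring

lemma EF.asymptotic (n : ℕ) (hn : 1 ≤ n) (t₀ : ℝ) (ht₀ : 1 ≤ t₀)
    (A A' x x' x'' : ℝ → ℝ)
    (hA : ∀ t ∈ Ici t₀, HasDerivWithinAt A (A' t) (Ici t₀) t)
    (hA_nonneg : ∀ t ∈ Ici t₀, 0 ≤ A t)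
    (hcond : ∀ t ∈ Ici t₀, (2 * n + 2) * A t + t * A' t ≤ 0)
    (hx : ∀ t ∈ Ici t₀, HasDerivAt x (x' t) t)
    (hx' : ∀ t ∈ Ici t₀, HasDerivAt x' (x'' t) t)
    (heq : ∀ t ∈ Ici t₀, x'' t + A t * x t ^ (2 * n - 1) = 0) :
    (fun t => x t) =o[atTop] (fun t : ℝ => t) ∨
      ∃ x₁ x₂ : ℝ, x₁ ≠ 0 ∧ Tendsto (fun t => x t - (x₁ * t + x₂)) atTop (nhds 0) := by
  set m := 2 * n - 1 with hm
  have ht₀0 : (0 : ℝ) < t₀ := lt_of_lt_of_le one_pos ht₀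
  -- global bound on x'
  set E₀ : ℝ := (n : ℝ) * x' t₀ ^ 2 + A t₀ * x t₀ ^ (2 * n) with hE₀
  set B : ℝ := Real.sqrt (E₀ / n) with hB
  have hn0 : (0 : ℝ) < n := by exact_mod_cast hn
  have hB_bound : ∀ t ∈ Ici t₀, |x' t| ≤ B := by
    intro t ht
    have hE := EF.energy_le n hn t₀ (t + 1) ht₀ A A' x x' x''
      (fun u hu => hA u hu.1) (fun u hu => hA_nonneg u hu.1) (fun u hu => hcond u hu.1)
      (fun u hu => hx u hu.1) (fun u hu => hx' u hu.1) (fun u hu => heq u hu.1)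
      t ⟨ht, by linarith⟩
    have h1 : 0 ≤ A t * x t ^ (2 * n) :=
      mul_nonneg (hA_nonneg t ht) (Even.pow_nonneg (even_two_mul n) _)
    have h2 : x' t ^ 2 ≤ E₀ / n := by
      rw [le_div_iff₀ hn0]
      nlinarith
    calc |x' t| = Real.sqrt (x' t ^ 2) := (Real.sqrt_sq_eq_abs _).symm
      _ ≤ B := Real.sqrt_le_sqrt h2
  have hB0 : 0 ≤ B := Real.sqrt_nonneg _
  -- linear growth of x
  set Cx : ℝ := |x t₀| + B with hCx
  have hCx0 : 0 ≤ Cx := by positivity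
  have hxlin : ∀ t ∈ Ici t₀, |x t| ≤ Cx * t := by
    intro t ht
    have key : ‖x t - x t₀‖ ≤ B * (t - t₀) := by
      apply norm_image_sub_le_of_norm_deriv_le_segment'
        (f' := x') (fun u hu => (hx u hu.1).hasDerivWithinAt)
        (fun u hu => (Real.norm_eq_abs _ ▸ hB_bound u hu.1))
      exact ⟨ht, le_rfl⟩
    rw [Real.norm_eq_abs] at key
    have h3 : |x t| - |x t₀| ≤ |x t - x t₀| := abs_sub_abs_le_abs_sub _ _
    have ht1 : (1 : ℝ) ≤ t := le_trans ht₀ ht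
    nlinarith [abs_nonneg (x t₀)]
  -- decay of A
  have hAd := EF.A_decay n t₀ ht₀ A A' hA hcond
  set C₁ : ℝ := A t₀ * t₀ ^ (2 * n + 2) with hC₁
  have hC₁0 : 0 ≤ C₁ := mul_nonneg (hA_nonneg t₀ self_mem_Ici) (by positivity)
  -- bound on x''
  set K : ℝ := C₁ * Cx ^ m with hK
  have hK0 : 0 ≤ K := mul_nonneg hC₁0 (by positivity)
  have hx''b : ∀ t ∈ Ici t₀, |x'' t| ≤ K / t ^ 3 := by
    intro t ht
    have ht0 : (0 : ℝ) < t := lt_of_lt_of_le ht₀0 ht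
    rw [le_div_iff₀ (by positivity : (0:ℝ) < t ^ 3)]
    have hxx : x'' t = -(A t * x t ^ m) := by have := heq t ht; linarith
    have hA0 : 0 ≤ A t := hA_nonneg t ht
    have h1 : |x'' t| = A t * |x t| ^ m := by
      rw [hxx, abs_neg, abs_mul, abs_pow, abs_of_nonneg hA0]
    rw [h1]
    have h2 : |x t| ^ m ≤ (Cx * t) ^ m :=
      pow_le_pow_left₀ (abs_nonneg _) (hxlin t ht) m
    have h3 : A t * |x t| ^ m * t ^ 3 ≤ A t * (Cx * t) ^ m * t ^ 3 := by
      apply mul_le_mul_of_nonneg_right (mul_le_mul_of_nonneg_left h2 hA0) (by positivity)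
    refine h3.trans ?_
    have hmul : (Cx * t) ^ m = Cx ^ m * t ^ m := mul_pow _ _ _
    have hpows : t ^ m * t ^ 3 = t ^ (2 * n + 2) := by
      rw [← pow_add]
      congr 1
      omega
    calc A t * (Cx * t) ^ m * t ^ 3 = (A t * t ^ (2 * n + 2)) * Cx ^ m := by
          rw [hmul]; rw [show A t * (Cx ^ m * t ^ m) * t ^ 3 = A t * (t ^ m * t ^ 3) * Cx ^ m by ring, hpows]
      _ ≤ C₁ * Cx ^ m := by
          apply mul_le_mul_of_nonneg_right (hAd t ht) (by positivity)
  -- continuity of x'' on Ici t₀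
  have hxc : ContinuousOn x (Ici t₀) := fun t ht => (hx t ht).continuousAt.continuousWithinAt
  have hx'c : ContinuousOn x' (Ici t₀) := fun t ht => (hx' t ht).continuousAt.continuousWithinAt
  have hAc : ContinuousOn A (Ici t₀) := fun t ht => (hA t ht).continuousWithinAt
  have hx''c : ContinuousOn x'' (Ici t₀) := by
    have : ContinuousOn (fun t => -(A t * x t ^ m)) (Ici t₀) := (hAc.mul (hxc.pow m)).neg
    exact this.congr (fun t ht => by have := heq t ht; linarith)
  -- integrability of x''
  have hrpow_int : ∀ c : ℝ, t₀ ≤ c → IntegrableOn (fun s : ℝ => K * s ^ (-3 : ℝ)) (Ioi c) := by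
    intro c hc
    exact (integrableOn_Ioi_rpow_of_lt (by norm_num) (lt_of_lt_of_le ht₀0 hc)).const_mul K
  have hbd : ∀ c : ℝ, t₀ ≤ c → ∀ s ∈ Ioi c, ‖x'' s‖ ≤ K * s ^ (-3 : ℝ) := by
    intro c hc s hs
    have hs0 : (0 : ℝ) < s := lt_trans (lt_of_lt_of_le ht₀0 hc) hs
    have h1 : s ^ (-3 : ℝ) = (s ^ 3)⁻¹ := by
      rw [← Real.rpow_natCast s 3, ← Real.rpow_neg hs0.le]
      norm_num
    rw [Real.norm_eq_abs, h1]
    have := hx''b s (le_trans hc (le_of_lt hs))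
    rw [div_eq_mul_inv] at this
    exact this
  have hx''int : ∀ c : ℝ, t₀ ≤ c → IntegrableOn x'' (Ioi c) := by
    intro c hc
    apply Integrable.mono' (hrpow_int c hc)
      ((hx''c.mono (fun s hs => le_trans hc (le_of_lt hs))).aestronglyMeasurable measurableSet_Ioi)
    exact ae_restrict_of_forall_mem measurableSet_Ioi (hbd c hc)
  -- FTC for x'
  have hFTC : ∀ t ∈ Ici t₀, x' t = x' t₀ + ∫ s in Ioc t₀ t, x'' s := by
    intro t ht
    have h1 : ∫ s in t₀..t, x'' s = x' t - x' t₀ := by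
      apply intervalIntegral.integral_eq_sub_of_hasDerivAt
      · intro u hu
        rw [uIcc_of_le ht] at hu
        exact hx' u (le_trans hu.1 (le_refl u) |>.trans_eq rfl)
      · exact (hx''c.mono (by rw [uIcc_of_le ht]; exact fun v hv => hv.1)).intervalIntegrable
    rw [intervalIntegral.integral_of_le ht] at h1
    linarith
  set x₁ : ℝ := x' t₀ + ∫ s in Ioi t₀, x'' s with hx₁def
  have hx'tend : Tendsto x' atTop (𝓝 x₁) := by
    have h1 := intervalIntegral_tendsto_integral_Ioi t₀ (hx''int t₀ le_rfl) tendsto_id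
    have h2 : Tendsto (fun t => x' t₀ + ∫ s in t₀..t, x'' s) atTop (𝓝 x₁) :=
      tendsto_const_nhds.add h1
    refine h2.congr' ?_
    filter_upwards [eventually_ge_atTop t₀] with t ht
    rw [intervalIntegral.integral_of_le ht]
    exact (hFTC t ht).symm
  -- tail estimate
  have hx'tail : ∀ t ∈ Ici t₀, |x' t - x₁| ≤ K / 2 * t ^ (-2 : ℝ) := by
    intro t ht
    have ht0 : (0 : ℝ) < t := lt_of_lt_of_le ht₀0 ht
    have hsplit : (∫ s in Ioi t₀, x'' s) =
        (∫ s in Ioc t₀ t, x'' s) + ∫ s in Ioi t, x'' s := by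
      rw [← setIntegral_union (Ioc_disjoint_Ioi le_rfl) measurableSet_Ioi
        ((hx''int t₀ le_rfl).mono_set Ioc_subset_Ioi_self) (hx''int t ht),
        Ioc_union_Ioi_eq_Ioi ht]
    have heqn : x' t - x₁ = -(∫ s in Ioi t, x'' s) := by
      rw [hx₁def, hFTC t ht, hsplit]; ring
    rw [heqn, abs_neg]
    have hnorm : ‖∫ s in Ioi t, x'' s‖ ≤ ∫ s in Ioi t, K * s ^ (-3 : ℝ) := by
      apply MeasureTheory.norm_integral_le_of_norm_le (hrpow_int t ht)
      exact ae_restrict_of_forall_mem measurableSet_Ioi (hbd t ht)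
    rw [Real.norm_eq_abs] at hnorm
    refine hnorm.trans ?_
    rw [MeasureTheory.integral_const_mul, integral_Ioi_rpow_of_lt (by norm_num) ht0]
    rw [show (-3 : ℝ) + 1 = -2 by norm_num]
    rw [show K * (-t ^ (-2 : ℝ) / (-2)) = K / 2 * t ^ (-2 : ℝ) by ring]
  -- integrability of x' - x₁
  have hx'int : IntegrableOn (fun s => x' s - x₁) (Ioi t₀) := by
    apply Integrable.mono'
      ((integrableOn_Ioi_rpow_of_lt (by norm_num : (-2:ℝ) < -1) ht₀0).const_mul (K / 2))
      (((hx'c.mono (fun s hs => le_of_lt hs)).sub continuousOn_const).aestronglyMeasurable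
        measurableSet_Ioi)
    exact ae_restrict_of_forall_mem measurableSet_Ioi
      (fun s hs => Real.norm_eq_abs _ ▸ hx'tail s (Set.mem_Ici.mpr (le_of_lt hs)))
  set x₂ : ℝ := (x t₀ - x₁ * t₀) + ∫ s in Ioi t₀, (x' s - x₁) with hx₂def
  have hFtend : Tendsto (fun t => x t - x₁ * t) atTop (𝓝 x₂) := by
    have h1 := intervalIntegral_tendsto_integral_Ioi t₀ hx'int tendsto_id
    have h2 : Tendsto (fun t => (x t₀ - x₁ * t₀) + ∫ s in t₀..t, (x' s - x₁)) atTop (𝓝 x₂) :=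
      tendsto_const_nhds.add h1
    refine h2.congr' ?_
    filter_upwards [eventually_ge_atTop t₀] with t ht
    have h3 : ∫ s in t₀..t, (x' s - x₁) = (x t - x₁ * t) - (x t₀ - x₁ * t₀) := by
      apply intervalIntegral.integral_eq_sub_of_hasDerivAt
      · intro u hu
        rw [uIcc_of_le ht] at hu
        have := (hx u hu.1).sub ((hasDerivAt_id u).const_mul x₁)
        rw [mul_one] at this
        exact this
      · exact ((hx'c.mono (by rw [uIcc_of_le ht]; exact fun v hv => hv.1)).sub
          continuousOn_const).intervalIntegrable
    rw [h3]
    ring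
  by_cases hx₁ : x₁ = 0
  · left
    rw [isLittleO_iff_tendsto']
    · have hxt : Tendsto x atTop (𝓝 x₂) := by
        refine hFtend.congr ?_
        intro t; rw [hx₁]; ring
      have := hxt.mul tendsto_inv_atTop_zero
      rw [mul_zero] at this
      exact this.congr (fun t => by rw [div_eq_mul_inv])
    · filter_upwards [eventually_gt_atTop (0:ℝ)] with t ht h0
      exact absurd h0 (ne_of_gt ht)
  · right
    refine ⟨x₁, x₂, hx₁, ?_⟩
    have := hFtend.sub_const x₂
    rw [sub_self] at this
    exact this.congr (fun t => by ring)


/-- Theorem 3: Emden–Fowler equation `x″ + A(t)x^{2n−1} = 0` with `A` of class `C¹`,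
`A(t) ≥ 0` and `(2n+2)A(t) + t·A′(t) ≤ 0` for `t ≥ t₀ ≥ 1`: every (maximal, i.e.
non-extendable) solution is defined on all of `[t₀, ∞)` and satisfies either
`x(t) = o(t)` or `x(t) = x₁t + x₂ + o(1)` with `x₁ ≠ 0`, as `t → +∞`. -/
theorem emden_fowler_caligo_type
    (n : ℕ) (hn : 1 ≤ n) (t₀ : ℝ) (ht₀ : 1 ≤ t₀) (A A' : ℝ → ℝ)
    (hA : ∀ t ∈ Set.Ici t₀, HasDerivWithinAt A (A' t) (Set.Ici t₀) t)
    (hA'_cont : ContinuousOn A' (Set.Ici t₀))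
    (hA_nonneg : ∀ t ∈ Set.Ici t₀, 0 ≤ A t)
    (hcond : ∀ t ∈ Set.Ici t₀, (2 * n + 2) * A t + t * A' t ≤ 0)
    (Tinf : EReal) (hT : (t₀ : EReal) < Tinf)
    (x x' x'' : ℝ → ℝ)
    (hx : ∀ t : ℝ, t₀ ≤ t → (t : EReal) < Tinf → HasDerivAt x (x' t) t)
    (hx' : ∀ t : ℝ, t₀ ≤ t → (t : EReal) < Tinf → HasDerivAt x' (x'' t) t)
    (heq : ∀ t : ℝ, t₀ ≤ t → (t : EReal) < Tinf →
      x'' t + A t * x t ^ (2 * n - 1) = 0)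
    (hmax : ∀ (y y' y'' : ℝ → ℝ) (T' : EReal), Tinf < T' →
      (∀ t : ℝ, t₀ ≤ t → (t : EReal) < T' → HasDerivAt y (y' t) t) →
      (∀ t : ℝ, t₀ ≤ t → (t : EReal) < T' → HasDerivAt y' (y'' t) t) →
      (∀ t : ℝ, t₀ ≤ t → (t : EReal) < T' → y'' t + A t * y t ^ (2 * n - 1) = 0) →
      ¬ (∀ t : ℝ, t₀ ≤ t → (t : EReal) < Tinf → y t = x t)) :
    Tinf = ⊤ ∧
      ((fun t => x t) =o[atTop] (fun t : ℝ => t) ∨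
        ∃ x₁ x₂ : ℝ, x₁ ≠ 0 ∧
          Tendsto (fun t => x t - (x₁ * t + x₂)) atTop (nhds 0)) := by
  have hn0 : (0 : ℝ) < n := by exact_mod_cast hn
  have hTop : Tinf = ⊤ := by
    by_contra hne
    have hnb : Tinf ≠ ⊥ := ne_of_gt (lt_trans (EReal.bot_lt_coe t₀) hT)
    set T : ℝ := Tinf.toReal with hTdef
    have hTr : (T : EReal) = Tinf := EReal.coe_toReal hne hnb
    have hTlt : t₀ < T := by
      rw [← hTr] at hT
      exact_mod_cast hT
    have hmem : ∀ t : ℝ, t ∈ Ico t₀ T → (t₀ ≤ t ∧ (t : EReal) < Tinf) := by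
      intro t ht
      refine ⟨ht.1, ?_⟩
      rw [← hTr]
      exact_mod_cast ht.2
    -- bound on x' from energy
    set E₀ : ℝ := (n : ℝ) * x' t₀ ^ 2 + A t₀ * x t₀ ^ (2 * n) with hE₀
    set B : ℝ := Real.sqrt (E₀ / n) with hB
    have hBb : ∀ t ∈ Ico t₀ T, |x' t| ≤ B := by
      intro t ht
      obtain ⟨ht1, ht2⟩ := hmem t ht
      have hE := EF.energy_le n hn t₀ T ht₀ A A' x x' x''
        (fun u hu => hA u hu.1) (fun u hu => hA_nonneg u hu.1) (fun u hu => hcond u hu.1)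
        (fun u hu => hx u (hmem u hu).1 (hmem u hu).2)
        (fun u hu => hx' u (hmem u hu).1 (hmem u hu).2)
        (fun u hu => heq u (hmem u hu).1 (hmem u hu).2) t ht
      have h1 : 0 ≤ A t * x t ^ (2 * n) :=
        mul_nonneg (hA_nonneg t ht.1) (Even.pow_nonneg (even_two_mul n) _)
      have h2 : x' t ^ 2 ≤ E₀ / n := by
        rw [le_div_iff₀ hn0]
        nlinarith
      calc |x' t| = Real.sqrt (x' t ^ 2) := (Real.sqrt_sq_eq_abs _).symm
        _ ≤ B := Real.sqrt_le_sqrt h2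
    obtain ⟨ε, y, yd, ydd, hε0, hy1, hy2, hy3, hagree⟩ :=
      EF.extend n hn t₀ T ht₀ hTlt A A' hA x x' x''
        (fun u hu => hx u (hmem u hu).1 (hmem u hu).2)
        (fun u hu => hx' u (hmem u hu).1 (hmem u hu).2)
        (fun u hu => heq u (hmem u hu).1 (hmem u hu).2) ⟨B, hBb⟩
    have hcoe : ∀ s : ℝ, (s : EReal) < ((T + ε : ℝ) : EReal) ↔ s < T + ε := by
      intro s; exact_mod_cast Iff.rfl
    apply hmax y yd ydd ((T + ε : ℝ) : EReal)
      (by rw [← hTr]; exact_mod_cast (by linarith : T < T + ε))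
      (fun t ht1 ht2 => hy1 t ⟨ht1, (hcoe t).1 ht2⟩)
      (fun t ht1 ht2 => hy2 t ⟨ht1, (hcoe t).1 ht2⟩)
      (fun t ht1 ht2 => hy3 t ⟨ht1, (hcoe t).1 ht2⟩)
    intro t ht1 ht2
    rw [← hTr] at ht2
    exact hagree t ⟨ht1, by exact_mod_cast ht2⟩
  refine ⟨hTop, ?_⟩
  have hall : ∀ t : ℝ, t₀ ≤ t → (t : EReal) < Tinf := by
    intro t _
    rw [hTop]
    exact EReal.coe_lt_top t
  exact EF.asymptotic n hn t₀ ht₀ A A' x x' x'' hA hA_nonneg hcond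
    (fun t ht => hx t ht (hall t ht)) (fun t ht => hx' t ht (hall t ht))
    (fun t ht => heq t ht (hall t ht))
end

section
/- Let f : [t₀,∞) × ℝ → ℝ (t₀ ≥ 1) be continuous with continuous partial derivative ∂f/∂v, and assume v·f(t,v) ≤ 0 and ∂f/∂v(t,v) ≤ 0 for all t ≥ t₀, v ∈ ℝ. Let (u,v) be a solution of the system u′ = −t f(t,v), v′ = u/t² on an interval [t₀,T) and define V(t) = u(t)²/2 + u(t)·∫_{t₀}^{t} s f(s, v(t)) ds. Then V is nonincreasing on [t₀,T); indeed V′(t) = −t f(t,v(t))·∫_{t₀}^{t} s f(s,v(t)) ds + (u(t)²/t²)·∫_{t₀}^{t} s (∂f/∂v)(s,v(t)) ds ≤ 0. -/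
open Filter Set intervalIntegral Asymptotics

private lemma aux_param_deriv (t₀ t w : ℝ) (g gv : ℝ → ℝ → ℝ)
    (hg : Continuous (fun p : ℝ × ℝ => g p.1 p.2))
    (hgv : Continuous (fun p : ℝ × ℝ => gv p.1 p.2))
    (hd : ∀ s b : ℝ, HasDerivAt (g s) (gv s b) b) :
    HasDerivAt (fun b => ∫ s in t₀..t, s * g s b) (∫ s in t₀..t, s * gv s w) w := by
  obtain ⟨C, hC⟩ := ((isCompact_uIcc (a := t₀) (b := t)).prod
      (isCompact_closedBall w 1)).exists_bound_of_continuousOn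
      ((continuous_fst.mul hgv).continuousOn)
  have key := intervalIntegral.hasDerivAt_integral_of_dominated_loc_of_deriv_le
    (F := fun b s => s * g s b) (F' := fun b s => s * gv s b) (x₀ := w)
    (a := t₀) (b := t) (bound := fun _ => C) (μ := MeasureTheory.volume)
    (s := Metric.ball w 1) (Metric.ball_mem_nhds w one_pos)
    (Eventually.of_forall fun b =>
      ((continuous_id.mul (hg.comp (continuous_id.prodMk continuous_const))).aestronglyMeasurable))
    ((continuous_id.mul (hg.comp (continuous_id.prodMk continuous_const))).intervalIntegrable _ _)
    ((continuous_id.mul (hgv.comp (continuous_id.prodMk continuous_const))).aestronglyMeasurable)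
    (MeasureTheory.ae_of_all _ fun s hs b hb => by
      simpa using hC (s, b) ⟨uIoc_subset_uIcc hs, Metric.ball_subset_closedBall hb⟩)
    intervalIntegrable_const
    (MeasureTheory.ae_of_all _ fun s _ b _ => (hd s b).const_mul s)
  exact key.2

private lemma aux_front_deriv (t w : ℝ) (g : ℝ → ℝ → ℝ)
    (hg : Continuous (fun p : ℝ × ℝ => g p.1 p.2)) :
    HasFDerivAt (fun p : ℝ × ℝ => ∫ s in t..p.1, s * g s p.2)
      ((t * g t w) • ContinuousLinearMap.fst ℝ ℝ ℝ) (t, w) := by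
  rw [hasFDerivAt_iff_isLittleO, isLittleO_iff]
  intro ε hε
  have hk : Continuous (fun p : ℝ × ℝ => p.1 * g p.1 p.2) := continuous_fst.mul hg
  have hc : ContinuousAt (fun p : ℝ × ℝ => p.1 * g p.1 p.2) (t, w) := hk.continuousAt
  rw [Metric.continuousAt_iff] at hc
  obtain ⟨δ, hδ, hball⟩ := hc ε hε
  filter_upwards [Metric.ball_mem_nhds (t, w) hδ] with p hp
  have h1 : |p.1 - t| ≤ ‖p - (t, w)‖ := by
    have := norm_fst_le (p - (t, w)); simpa using this
  have h2 : ‖p.2 - w‖ ≤ ‖p - (t, w)‖ := by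
    have := norm_snd_le (p - (t, w)); simpa using this
  have hpn : ‖p - (t, w)‖ < δ := by rwa [Metric.mem_ball, dist_eq_norm] at hp
  have hbound : ∀ s ∈ Set.uIoc t p.1, ‖s * g s p.2 - t * g t w‖ ≤ ε := by
    intro s hs
    have hs' : s ∈ uIcc t p.1 := uIoc_subset_uIcc hs
    have hst : |s - t| ≤ |p.1 - t| := by
      rw [uIcc_eq_union] at hs'
      rcases hs' with h | h <;> rw [abs_sub_le_iff] <;>
        constructor <;> simp at h ⊢ <;> nlinarith [abs_nonneg (p.1 - t),
          le_abs_self (p.1 - t), neg_abs_le (p.1 - t)]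
    have : dist (s, p.2) (t, w) < δ := by
      rw [Prod.dist_eq]
      apply max_lt
      · calc dist s t = |s - t| := by rw [Real.dist_eq]
          _ ≤ |p.1 - t| := hst
          _ ≤ ‖p - (t, w)‖ := h1
          _ < δ := hpn
      · calc dist p.2 w = ‖p.2 - w‖ := by rw [dist_eq_norm]
          _ ≤ ‖p - (t, w)‖ := h2
          _ < δ := hpn
    exact le_of_lt (hball this)
  have hint : ∀ b : ℝ, ∀ x y : ℝ,
      IntervalIntegrable (fun s => s * g s b) MeasureTheory.volume x y :=
    fun b x y =>
      (continuous_id.mul (hg.comp (continuous_id.prodMk continuous_const))).intervalIntegrable _ _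
  have key : ‖∫ s in t..p.1, (s * g s p.2 - t * g t w)‖ ≤ ε * |p.1 - t| :=
    intervalIntegral.norm_integral_le_of_norm_le_const hbound
  have heq : (∫ s in t..p.1, (s * g s p.2 - t * g t w))
      = (∫ s in t..p.1, s * g s p.2) - (p.1 - t) * (t * g t w) := by
    rw [intervalIntegral.integral_sub (hint p.2 t p.1) intervalIntegrable_const]
    simp
    ring
  rw [heq] at key
  calc ‖(∫ s in t..p.1, s * g s p.2) - (∫ s in t..t, s * g s w)
        - ((t * g t w) • ContinuousLinearMap.fst ℝ ℝ ℝ) (p - (t, w))‖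
      = ‖(∫ s in t..p.1, s * g s p.2) - (p.1 - t) * (t * g t w)‖ := by
        simp [mul_comm]
    _ ≤ ε * |p.1 - t| := key
    _ ≤ ε * ‖p - (t, w)‖ := mul_le_mul_of_nonneg_left h1 (le_of_lt hε)

private lemma aux_comp_deriv (t₀ : ℝ) (g gv : ℝ → ℝ → ℝ)
    (hg : Continuous (fun p : ℝ × ℝ => g p.1 p.2))
    (hgv : Continuous (fun p : ℝ × ℝ => gv p.1 p.2))
    (hd : ∀ s b : ℝ, HasDerivAt (g s) (gv s b) b)
    (t : ℝ) (v : ℝ → ℝ) (c : ℝ) (hv : HasDerivAt v c t) :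
    HasDerivAt (fun τ => ∫ s in t₀..τ, s * g s (v τ))
      (t * g t (v t) + (∫ s in t₀..t, s * gv s (v t)) * c) t := by
  set w := v t
  have hint : ∀ b : ℝ, ∀ x y : ℝ,
      IntervalIntegrable (fun s => s * g s b) MeasureTheory.volume x y :=
    fun b x y =>
      (continuous_id.mul (hg.comp (continuous_id.prodMk continuous_const))).intervalIntegrable _ _
  -- derivative of the fixed-endpoint part, as an FDeriv via snd
  have h2' : HasFDerivAt (fun b => ∫ s in t₀..t, s * g s b)
      (ContinuousLinearMap.smulRight (1 : ℝ →L[ℝ] ℝ) (∫ s in t₀..t, s * gv s w)) w :=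
    (aux_param_deriv t₀ t w g gv hg hgv hd).hasFDerivAt
  have h2 : HasFDerivAt (fun p : ℝ × ℝ => ∫ s in t₀..t, s * g s p.2)
      ((ContinuousLinearMap.smulRight (1 : ℝ →L[ℝ] ℝ) (∫ s in t₀..t, s * gv s w)).comp
        (ContinuousLinearMap.snd ℝ ℝ ℝ)) (t, w) :=
    h2'.comp (g := fun b => ∫ s in t₀..t, s * g s b) (t, w) ((ContinuousLinearMap.snd ℝ ℝ ℝ).hasFDerivAt)
  have h1 := aux_front_deriv t w g hg
  have hsum : HasFDerivAt (fun p : ℝ × ℝ => (∫ s in t..p.1, s * g s p.2) + ∫ s in t₀..t, s * g s p.2) _ (t, w) := h1.add h2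
  have hfun : (fun p : ℝ × ℝ => (∫ s in t..p.1, s * g s p.2) + ∫ s in t₀..t, s * g s p.2)
      = fun p : ℝ × ℝ => ∫ s in t₀..p.1, s * g s p.2 := by
    funext p
    rw [add_comm]
    exact intervalIntegral.integral_add_adjacent_intervals (hint p.2 t₀ t) (hint p.2 t p.1)
  rw [hfun] at hsum
  have hcurve : HasDerivAt (fun τ => ((τ, v τ) : ℝ × ℝ)) ((1 : ℝ), c) t :=
    (hasDerivAt_id t).prodMk hv
  have := hsum.comp_hasDerivAt t hcurve
  simpa [mul_comm, Function.comp_def] using this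

/-- The Lyapunov function `V(t) = u(t)²/2 + u(t)·∫_{t₀}^{t} s f(s, v(t)) ds` along a
solution `(u, v)` of the system `u′ = −t f(t,v)`, `v′ = u/t²` is nonincreasing on
`[t₀, T)` when `v·f(t,v) ≤ 0` and `∂f/∂v ≤ 0`; indeed its derivative equals
`−t f(t,v(t))·∫_{t₀}^{t} s f(s,v(t)) ds + (u(t)²/t²)·∫_{t₀}^{t} s ∂f/∂v(s,v(t)) ds ≤ 0`. -/
theorem lyapunov_nonincreasing_first
    (t₀ : ℝ) (ht₀ : 1 ≤ t₀) (f fv : ℝ → ℝ → ℝ)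
    (hf_cont : ContinuousOn (fun p : ℝ × ℝ => f p.1 p.2) (Set.Ici t₀ ×ˢ Set.univ))
    (hfv : ∀ t ∈ Set.Ici t₀, ∀ w : ℝ, HasDerivAt (f t) (fv t w) w)
    (hfv_cont : ContinuousOn (fun p : ℝ × ℝ => fv p.1 p.2) (Set.Ici t₀ ×ˢ Set.univ))
    (hsign : ∀ t ∈ Set.Ici t₀, ∀ w : ℝ, w * f t w ≤ 0)
    (hfv_nonpos : ∀ t ∈ Set.Ici t₀, ∀ w : ℝ, fv t w ≤ 0)
    (Tinf : EReal) (hT : (t₀ : EReal) < Tinf)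
    (u v : ℝ → ℝ)
    (hu : ∀ t : ℝ, t₀ ≤ t → (t : EReal) < Tinf → HasDerivAt u (-(t * f t (v t))) t)
    (hv : ∀ t : ℝ, t₀ ≤ t → (t : EReal) < Tinf → HasDerivAt v (u t / t ^ 2) t) :
    (∀ t : ℝ, t₀ ≤ t → (t : EReal) < Tinf →
      HasDerivWithinAt (fun τ => u τ ^ 2 / 2 + u τ * ∫ s in t₀..τ, s * f s (v τ))
        (-(t * f t (v t)) * (∫ s in t₀..t, s * f s (v t)) +
          u t ^ 2 / t ^ 2 * ∫ s in t₀..t, s * fv s (v t))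
        {r : ℝ | t₀ ≤ r ∧ (r : EReal) < Tinf} t ∧
      -(t * f t (v t)) * (∫ s in t₀..t, s * f s (v t)) +
          u t ^ 2 / t ^ 2 * (∫ s in t₀..t, s * fv s (v t)) ≤ 0) ∧
    AntitoneOn (fun τ => u τ ^ 2 / 2 + u τ * ∫ s in t₀..τ, s * f s (v τ))
      {r : ℝ | t₀ ≤ r ∧ (r : EReal) < Tinf} := by
  -- extended versions of f and fv, continuous on all of ℝ × ℝ
  set g : ℝ → ℝ → ℝ := fun s b => f (max s t₀) b with hg_def
  set gv : ℝ → ℝ → ℝ := fun s b => fv (max s t₀) b with hgv_def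
  have hmax : Continuous (fun p : ℝ × ℝ => ((max p.1 t₀, p.2) : ℝ × ℝ)) :=
    (continuous_fst.max continuous_const).prodMk continuous_snd
  have hg : Continuous (fun p : ℝ × ℝ => g p.1 p.2) := by
    refine hf_cont.comp_continuous hmax fun p => ?_
    exact ⟨Set.mem_Ici.mpr (le_max_right _ _), trivial⟩
  have hgv : Continuous (fun p : ℝ × ℝ => gv p.1 p.2) := by
    refine hfv_cont.comp_continuous hmax fun p => ?_
    exact ⟨Set.mem_Ici.mpr (le_max_right _ _), trivial⟩
  have hd : ∀ s b : ℝ, HasDerivAt (g s) (gv s b) b := fun s b =>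
    hfv (max s t₀) (Set.mem_Ici.mpr (le_max_right _ _)) b
  set S : Set ℝ := {r : ℝ | t₀ ≤ r ∧ (r : EReal) < Tinf} with hS_def
  -- the sign lemma: f has a constant sign in its first argument
  have hf_nonpos0 : ∀ t ∈ Set.Ici t₀, f t 0 ≤ 0 := by
    intro t ht
    have hcont : ContinuousWithinAt (f t) (Set.Ioi (0:ℝ)) 0 :=
      ((hfv t ht 0).continuousAt).continuousWithinAt
    refine le_of_tendsto hcont.tendsto ?_
    filter_upwards [self_mem_nhdsWithin] with w hw
    have := hsign t ht w
    have hw' : (0:ℝ) < w := hw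
    nlinarith
  have hsign2 : ∀ t' ∈ Set.Ici t₀, ∀ s ∈ Set.Ici t₀, ∀ w : ℝ, 0 ≤ f t' w * f s w := by
    intro t' ht' s hs w
    rcases lt_trichotomy w 0 with hw | hw | hw
    · have h1 := hsign t' ht' w; have h2 := hsign s hs w
      have : 0 ≤ f t' w := by nlinarith
      have : 0 ≤ f s w := by nlinarith
      positivity
    · subst hw
      have h1 := hf_nonpos0 t' ht'; have h2 := hf_nonpos0 s hs
      nlinarith
    · have h1 := hsign t' ht' w; have h2 := hsign s hs w
      have h3 : f t' w ≤ 0 := by nlinarith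
      have h4 : f s w ≤ 0 := by nlinarith
      nlinarith
  have main : ∀ t : ℝ, t₀ ≤ t → (t : EReal) < Tinf →
      HasDerivWithinAt (fun τ => u τ ^ 2 / 2 + u τ * ∫ s in t₀..τ, s * f s (v τ))
        (-(t * f t (v t)) * (∫ s in t₀..t, s * f s (v t)) +
          u t ^ 2 / t ^ 2 * ∫ s in t₀..t, s * fv s (v t)) S t ∧
      -(t * f t (v t)) * (∫ s in t₀..t, s * f s (v t)) +
          u t ^ 2 / t ^ 2 * (∫ s in t₀..t, s * fv s (v t)) ≤ 0 := by
    intro t ht hlt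
    have ht1 : (1:ℝ) ≤ t := le_trans ht₀ ht
    have ht0 : (0:ℝ) < t := lt_of_lt_of_le one_pos ht1
    have htne : t ≠ 0 := ne_of_gt ht0
    -- integrals of g/gv coincide with those of f/fv
    have hgf_any : ∀ τ : ℝ, t₀ ≤ τ → ∀ b : ℝ,
        (∫ s in t₀..τ, s * g s b) = ∫ s in t₀..τ, s * f s b := by
      intro τ hτ b
      refine intervalIntegral.integral_congr fun s hs => ?_
      rw [uIcc_of_le hτ] at hs
      simp [hg_def, max_eq_left hs.1]
    have hgf_int : ∀ b : ℝ, (∫ s in t₀..t, s * g s b) = ∫ s in t₀..t, s * f s b :=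
      hgf_any t ht
    have hgvfv_int : (∫ s in t₀..t, s * gv s (v t)) = ∫ s in t₀..t, s * fv s (v t) := by
      refine intervalIntegral.integral_congr fun s hs => ?_
      rw [uIcc_of_le ht] at hs
      simp [hgv_def, max_eq_left hs.1]
    have hgf : g t (v t) = f t (v t) := by simp [hg_def, max_eq_left ht]
    -- derivative of the integral term
    have hH := aux_comp_deriv t₀ g gv hg hgv hd t v (u t / t ^ 2) (hv t ht hlt)
    -- derivative of the whole g-version function
    have hu' := hu t ht hlt
    have hW : HasDerivAt (fun τ => u τ ^ 2 / 2 + u τ * ∫ s in t₀..τ, s * g s (v τ))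
        ((-(t * f t (v t)) * u t + u t * -(t * f t (v t))) / 2 +
          (-(t * f t (v t)) * (∫ s in t₀..t, s * g s (v t)) +
            u t * (t * g t (v t) + (∫ s in t₀..t, s * gv s (v t)) * (u t / t ^ 2)))) t := by
      have hsq : HasDerivAt (fun τ => u τ ^ 2 / 2)
          ((-(t * f t (v t)) * u t + u t * -(t * f t (v t))) / 2) t := by
        have := (hu'.mul hu').div_const 2
        simpa [pow_two] using this
      exact hsq.add (hu'.mul hH)
    -- identify the derivative value
    have hval : (-(t * f t (v t)) * u t + u t * -(t * f t (v t))) / 2 +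
          (-(t * f t (v t)) * (∫ s in t₀..t, s * g s (v t)) +
            u t * (t * g t (v t) + (∫ s in t₀..t, s * gv s (v t)) * (u t / t ^ 2)))
        = -(t * f t (v t)) * (∫ s in t₀..t, s * f s (v t)) +
          u t ^ 2 / t ^ 2 * ∫ s in t₀..t, s * fv s (v t) := by
      rw [hgf_int, hgvfv_int, hgf]
      field_simp
      ring
    rw [hval] at hW
    constructor
    · have hWV : ∀ τ : ℝ, t₀ ≤ τ →
          u τ ^ 2 / 2 + (u τ * ∫ s in t₀..τ, s * f s (v τ)) =
            u τ ^ 2 / 2 + (u τ * ∫ s in t₀..τ, s * g s (v τ)) := by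
        intro τ hτ
        rw [hgf_any τ hτ]
      exact (hW.hasDerivWithinAt).congr (fun τ hτ => hWV τ hτ.1) (hWV t ht)
    · -- sign of the derivative
      have hterm1 : -(t * f t (v t)) * (∫ s in t₀..t, s * f s (v t)) ≤ 0 := by
        have hin : 0 ≤ ∫ s in t₀..t, f t (v t) * (s * f s (v t)) := by
          refine intervalIntegral.integral_nonneg ht fun s hs => ?_
          have h1 : 0 ≤ f t (v t) * f s (v t) := hsign2 t ht s hs.1 (v t)
          have h2 : (0:ℝ) < s := lt_of_lt_of_le one_pos (le_trans ht₀ hs.1)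
          nlinarith
        rw [intervalIntegral.integral_const_mul] at hin
        nlinarith
      have hterm2 : u t ^ 2 / t ^ 2 * (∫ s in t₀..t, s * fv s (v t)) ≤ 0 := by
        have hin : (∫ s in t₀..t, s * fv s (v t)) ≤ 0 := by
          rw [← neg_nonneg, ← intervalIntegral.integral_neg]
          refine intervalIntegral.integral_nonneg ht fun s hs => ?_
          have h1 : fv s (v t) ≤ 0 := hfv_nonpos s hs.1 (v t)
          have h2 : (0:ℝ) < s := lt_of_lt_of_le one_pos (le_trans ht₀ hs.1)
          nlinarith
        have : (0:ℝ) ≤ u t ^ 2 / t ^ 2 := by positivity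
        exact mul_nonpos_of_nonneg_of_nonpos this hin
      linarith
  refine ⟨main, ?_⟩
  -- antitonicity
  have hconv : Convex ℝ S := by
    refine Set.OrdConnected.convex ⟨fun x hx y hy z hz => ?_⟩
    exact ⟨le_trans hx.1 hz.1, lt_of_le_of_lt (EReal.coe_le_coe_iff.mpr hz.2) hy.2⟩
  refine antitoneOn_of_hasDerivWithinAt_nonpos hconv
    (fun x hx => ((main x hx.1 hx.2).1).continuousWithinAt)
    (fun x hx => (((main x (interior_subset hx).1 (interior_subset hx).2).1).mono
      interior_subset)) (fun x hx => (main x (interior_subset hx).1 (interior_subset hx).2).2)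
end

section
/- Let f : [t₀,∞) × ℝ → ℝ (t₀ ≥ 1) be continuous with continuous partial derivative ∂f/∂t, and assume v·[3f(t,v) + t·(∂f/∂t)(t,v)] ≤ 0 for all t ≥ t₀ and all v ≠ 0. Let (u,v) be a solution of the system u′ = −t f(t,v), v′ = u/t² on an interval [t₀,T) and define V(t) = u(t)²/2 + t³·∫_{0}^{v(t)} f(t,s) ds. Then V′(t) = t²·∫_{0}^{v(t)} [3f(t,s) + t(∂f/∂t)(t,s)] ds ≤ 0, so V is nonincreasing on [t₀,T). -/
open Filter Set

private lemma ftc_within {t₀ a b : ℝ} {G g : ℝ → ℝ} (ha : t₀ ≤ a) (hb : t₀ ≤ b)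
    (hGc : Continuous G) (hgc : Continuous g)
    (hder : ∀ σ ∈ Set.Ici t₀, HasDerivWithinAt G (g σ) (Set.Ici t₀) σ) :
    ∫ σ in a..b, g σ = G b - G a := by
  apply intervalIntegral.integral_eq_sub_of_hasDeriv_right hGc.continuousOn ?_
    (hgc.intervalIntegrable _ _)
  intro x hx
  have hx' : t₀ ≤ x := le_trans (le_min ha hb) hx.1.le
  exact (hder x hx').mono fun y hy => hx'.trans hy.le

private lemma aux_deriv {t₀ t v' : ℝ} {F Ft : ℝ → ℝ → ℝ} {v : ℝ → ℝ}
    (hF : Continuous fun p : ℝ × ℝ => F p.1 p.2)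
    (hFt : Continuous fun p : ℝ × ℝ => Ft p.1 p.2)
    (hder : ∀ s : ℝ, ∀ σ ∈ Set.Ici t₀, HasDerivWithinAt (fun σ => F σ s) (Ft σ s) (Set.Ici t₀) σ)
    (ht : t₀ ≤ t) (hv : HasDerivAt v v' t) :
    HasDerivWithinAt (fun τ => ∫ s in (0:ℝ)..v τ, F τ s)
      (F t (v t) * v' + ∫ s in (0:ℝ)..v t, Ft t s) (Set.Ici t₀) t := by
  have hFs : ∀ τ, Continuous fun s => F τ s := fun τ =>
    hF.comp (continuous_const.prodMk continuous_id)
  have hFσ : ∀ s, Continuous fun σ => F σ s := fun s =>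
    hF.comp (continuous_id.prodMk continuous_const)
  have hFtσ : ∀ s, Continuous fun σ => Ft σ s := fun s =>
    hFt.comp (continuous_id.prodMk continuous_const)
  have hFts : ∀ τ, Continuous fun s => Ft τ s := fun τ =>
    hFt.comp (continuous_const.prodMk continuous_id)
  set a := v t with ha
  -- FTC2 for the time variable
  have key : ∀ τ, t₀ ≤ τ → ∀ s : ℝ, (∫ σ in t..τ, Ft σ s) = F τ s - F t s := fun τ hτ s =>
    ftc_within ht hτ (hFσ s) (hFtσ s) (hder s)
  have g₁ : HasDerivAt (fun τ => ∫ s in (0:ℝ)..v τ, F t s) (F t a * v') t := by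
    have h0 : HasDerivAt (fun y => ∫ s in (0:ℝ)..y, F t s) (F t a) a :=
      intervalIntegral.integral_hasDerivAt_right ((hFs t).intervalIntegrable _ _)
        ((hFs t).stronglyMeasurableAtFilter _ _) (hFs t).continuousAt
    exact h0.comp t hv
  set R₁ : ℝ → ℝ := fun τ => ∫ s in (0:ℝ)..a, (F τ s - F t s) with hR₁def
  set R₂ : ℝ → ℝ := fun τ => ∫ s in a..v τ, (F τ s - F t s) with hR₂def
  -- an eventual Lipschitz-type bound for v near t
  have hvlip : ∀ᶠ τ in nhds t, |v τ - a| ≤ (|v'| + 1) * |τ - t| := by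
    have h := hasDerivAt_iff_isLittleO.mp hv
    have h2 := (Asymptotics.isLittleO_iff.mp h) (c := 1) one_pos
    filter_upwards [h2] with τ hτ
    simp only [smul_eq_mul, Real.norm_eq_abs, one_mul] at hτ
    have h3 : |v τ - a| ≤ |v τ - a - (τ - t) * v'| + |(τ - t) * v'| := by
      calc |v τ - a| = |(v τ - a - (τ - t) * v') + (τ - t) * v'| := by ring_nf
        _ ≤ _ := abs_add_le _ _
    have h4 : |(τ - t) * v'| = |τ - t| * |v'| := abs_mul _ _
    nlinarith [abs_nonneg (τ - t)]
  -- R₁ : fixed endpoints, o(τ - t) via uniform continuity of Ft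
  have hR₁ : HasDerivWithinAt R₁ (∫ s in (0:ℝ)..a, Ft t s) (Set.Ici t₀) t := by
    rw [hasDerivWithinAt_iff_isLittleO]
    have hR₁t : R₁ t = 0 := by simp [hR₁def]
    rw [Asymptotics.isLittleO_iff]
    intro c hc
    have huc := ((isCompact_Icc (a := t - 1) (b := t + 1)).prod
      (isCompact_uIcc (a := (0:ℝ)) (b := a))).uniformContinuousOn_of_continuous hFt.continuousOn
    rw [Metric.uniformContinuousOn_iff] at huc
    have hA : (0:ℝ) < |a| + 1 := by positivity
    have hεpos : 0 < c / (|a| + 1) := by positivity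
    obtain ⟨δ, hδpos, hδ⟩ := huc _ hεpos
    have e3 : ∀ᶠ τ in nhdsWithin t (Set.Ici t₀), |τ - t| < min δ 1 := by
      apply Filter.Eventually.filter_mono nhdsWithin_le_nhds
      filter_upwards [Metric.ball_mem_nhds t (show (0:ℝ) < min δ 1 by positivity)] with τ hτ
      simpa [Real.dist_eq] using hτ
    filter_upwards [e3, self_mem_nhdsWithin] with τ hτ hτt0
    have hstep : ∀ s ∈ Set.uIoc (0:ℝ) a,
        ‖F τ s - F t s - (τ - t) * Ft t s‖ ≤ c / (|a| + 1) * |τ - t| := by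
      intro s hs
      have hsK : s ∈ Set.uIcc (0:ℝ) a := Set.uIoc_subset_uIcc hs
      have heq : F τ s - F t s - (τ - t) * Ft t s = ∫ σ in t..τ, (Ft σ s - Ft t s) := by
        rw [intervalIntegral.integral_sub ((hFtσ s).intervalIntegrable _ _)
          intervalIntegrable_const, key τ hτt0 s, intervalIntegral.integral_const,
          smul_eq_mul]
      rw [heq]
      apply intervalIntegral.norm_integral_le_of_norm_le_const
      intro σ hσ
      have hσt : |σ - t| ≤ |τ - t| := by
        rcases Set.mem_uIoc.mp hσ with h | h <;> rw [abs_le] <;>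
          constructor <;> nlinarith [le_abs_self (τ - t), neg_abs_le (τ - t), h.1, h.2]
      have hσI : σ ∈ Set.Icc (t - 1) (t + 1) := by
        have h1 : |σ - t| ≤ 1 := le_trans hσt (le_of_lt (lt_of_lt_of_le hτ (min_le_right _ _)))
        rw [abs_le] at h1
        constructor <;> linarith [h1.1, h1.2]
      have h1 : ((σ, s) : ℝ × ℝ) ∈ Set.Icc (t-1) (t+1) ×ˢ Set.uIcc (0:ℝ) a :=
        Set.mem_prod.mpr ⟨hσI, hsK⟩
      have h2 : ((t, s) : ℝ × ℝ) ∈ Set.Icc (t-1) (t+1) ×ˢ Set.uIcc (0:ℝ) a :=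
        Set.mem_prod.mpr ⟨by constructor <;> linarith, hsK⟩
      have hdist : dist ((σ, s) : ℝ × ℝ) ((t, s) : ℝ × ℝ) < δ := by
        rw [Prod.dist_eq]
        simp only [dist_self, Real.dist_eq]
        have h3 : |σ - t| < δ := lt_of_le_of_lt hσt (lt_of_lt_of_le hτ (min_le_left _ _))
        simpa [max_eq_left (abs_nonneg (σ - t))] using h3
      have h4 := hδ _ h1 _ h2 hdist
      rw [Real.dist_eq] at h4
      exact le_of_lt h4
    have hi1 : IntervalIntegrable (fun s => F τ s - F t s) MeasureTheory.volume 0 a :=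
      (((hFs τ).sub (hFs t))).intervalIntegrable _ _
    have hi2 : IntervalIntegrable (fun s => (τ - t) * Ft t s) MeasureTheory.volume 0 a :=
      (continuous_const.mul (hFts t)).intervalIntegrable _ _
    calc ‖R₁ τ - R₁ t - (τ - t) • (∫ s in (0:ℝ)..a, Ft t s)‖
        = ‖∫ s in (0:ℝ)..a, (F τ s - F t s - (τ - t) * Ft t s)‖ := by
          rw [hR₁t, sub_zero, smul_eq_mul, ← intervalIntegral.integral_const_mul,
            hR₁def, ← intervalIntegral.integral_sub hi1 hi2]
      _ ≤ c / (|a| + 1) * |τ - t| * |a - 0| :=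
          intervalIntegral.norm_integral_le_of_norm_le_const hstep
      _ ≤ c * ‖τ - t‖ := by
          rw [Real.norm_eq_abs, sub_zero]
          have h5 : c / (|a| + 1) * (|a| + 1) = c := div_mul_cancel₀ _ (ne_of_gt hA)
          nlinarith [abs_nonneg (τ - t), abs_nonneg a, hεpos]
  -- R₂ : moving endpoint, O((τ-t)^2)
  have hR₂ : HasDerivWithinAt R₂ 0 (Set.Ici t₀) t := by
    rw [hasDerivWithinAt_iff_isLittleO]
    have hR₂t : R₂ t = 0 := by simp [hR₂def]
    rw [Asymptotics.isLittleO_iff]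
    intro c hc
    obtain ⟨M, hM⟩ := ((isCompact_Icc (a := t - 1) (b := t + 1)).prod
      (isCompact_Icc (a := a - 1) (b := a + 1))).exists_bound_of_continuousOn hFt.continuousOn
    have hM0 : 0 ≤ M := le_trans (norm_nonneg _) (hM (t, a)
      (Set.mem_prod.mpr ⟨by constructor <;> linarith, by constructor <;> linarith⟩))
    have hV : (0:ℝ) < |v'| + 1 := by positivity
    have hP : (0:ℝ) < (|v'| + 1) * (M + 1) := by positivity
    set δ₂ : ℝ := min (1 / (|v'| + 1)) (c / ((|v'| + 1) * (M + 1))) with hδ₂def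
    have hδ₂pos : 0 < δ₂ := lt_min (by positivity) (by positivity)
    have e3 : ∀ᶠ τ in nhdsWithin t (Set.Ici t₀), |τ - t| < δ₂ := by
      apply Filter.Eventually.filter_mono nhdsWithin_le_nhds
      filter_upwards [Metric.ball_mem_nhds t hδ₂pos] with τ hτ
      simpa [Real.dist_eq] using hτ
    filter_upwards [e3, self_mem_nhdsWithin, hvlip.filter_mono nhdsWithin_le_nhds]
      with τ hτ hτt0 hvτ
    have hτ1 : |τ - t| ≤ 1 := by
      have h1 : δ₂ ≤ 1 / (|v'| + 1) := min_le_left _ _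
      have h2 : 1 / (|v'| + 1) ≤ 1 := by
        rw [div_le_one hV]; linarith [abs_nonneg v']
      linarith [hτ.le]
    have hva : |v τ - a| ≤ 1 := by
      have h1 : (|v'| + 1) * |τ - t| ≤ (|v'| + 1) * (1 / (|v'| + 1)) := by
        apply mul_le_mul_of_nonneg_left _ hV.le
        exact le_trans hτ.le (min_le_left _ _)
      rw [mul_one_div_cancel (ne_of_gt hV)] at h1
      linarith
    have hstep : ∀ s ∈ Set.uIoc a (v τ), ‖F τ s - F t s‖ ≤ M * |τ - t| := by
      intro s hs
      have hsK : s ∈ Set.Icc (a - 1) (a + 1) := by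
        have h1 : s ∈ Set.uIcc a (v τ) := Set.uIoc_subset_uIcc hs
        rw [Set.mem_uIcc] at h1
        rw [abs_le] at hva
        rcases h1 with h | h <;> constructor <;> linarith [h.1, h.2, hva.1, hva.2]
      rw [← key τ hτt0 s]
      apply intervalIntegral.norm_integral_le_of_norm_le_const
      intro σ hσ
      have hσt : |σ - t| ≤ |τ - t| := by
        rcases Set.mem_uIoc.mp hσ with h | h <;> rw [abs_le] <;>
          constructor <;> nlinarith [le_abs_self (τ - t), neg_abs_le (τ - t), h.1, h.2]
      have hσI : σ ∈ Set.Icc (t - 1) (t + 1) := by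
        have h1 : |σ - t| ≤ 1 := le_trans hσt hτ1
        rw [abs_le] at h1
        constructor <;> linarith [h1.1, h1.2]
      exact hM (σ, s) (Set.mem_prod.mpr ⟨hσI, hsK⟩)
    calc ‖R₂ τ - R₂ t - (τ - t) • (0:ℝ)‖ = ‖R₂ τ‖ := by rw [hR₂t]; simp
      _ ≤ M * |τ - t| * |v τ - a| :=
          intervalIntegral.norm_integral_le_of_norm_le_const hstep
      _ ≤ M * |τ - t| * ((|v'| + 1) * |τ - t|) := by
          apply mul_le_mul_of_nonneg_left hvτ (by positivity)
      _ ≤ c * ‖τ - t‖ := by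
          rw [Real.norm_eq_abs]
          have h1 : |τ - t| ≤ c / ((|v'| + 1) * (M + 1)) := le_trans hτ.le (min_le_right _ _)
          have h2 : |τ - t| * ((|v'| + 1) * (M + 1)) ≤ c := by
            rw [← le_div_iff₀ hP]; exact h1
          nlinarith [mul_le_mul_of_nonneg_right h2 (abs_nonneg (τ - t)),
            mul_nonneg (mul_nonneg (abs_nonneg (τ - t)) (abs_nonneg (τ - t))) hV.le,
            abs_nonneg (τ - t)]
  -- assemble
  have hfun : (fun τ => ∫ s in (0:ℝ)..v τ, F τ s)
      = fun τ => (∫ s in (0:ℝ)..v τ, F t s) + (R₁ τ + R₂ τ) := by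
    funext τ
    have hi1 : IntervalIntegrable (fun s => F t s) MeasureTheory.volume 0 (v τ) :=
      (hFs t).intervalIntegrable _ _
    have hi2 : IntervalIntegrable (fun s => F τ s - F t s) MeasureTheory.volume 0 (v τ) :=
      ((hFs τ).sub (hFs t)).intervalIntegrable _ _
    have h3 : R₁ τ + R₂ τ = ∫ s in (0:ℝ)..v τ, (F τ s - F t s) :=
      intervalIntegral.integral_add_adjacent_intervals
        (((hFs τ).sub (hFs t)).intervalIntegrable _ _)
        (((hFs τ).sub (hFs t)).intervalIntegrable _ _)
    rw [h3, ← intervalIntegral.integral_add hi1 hi2]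
    congr 1
    funext s
    ring
  rw [hfun]
  have hres := g₁.hasDerivWithinAt.add (hR₁.add hR₂)
  convert hres using 1
  · rfl
  · rfl
  · rfl
  ring

/-- The Lyapunov function `V(t) = u(t)²/2 + t³·∫_0^{v(t)} f(t,s) ds` along a solution
`(u, v)` of the system `u′ = −t f(t,v)`, `v′ = u/t²` satisfies
`V′(t) = t²·∫_0^{v(t)} [3f(t,s) + t ∂f/∂t(t,s)] ds ≤ 0` when
`v·[3f(t,v) + t·∂f/∂t(t,v)] ≤ 0` for `v ≠ 0`; hence `V` is nonincreasing on `[t₀, T)`. -/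
theorem lyapunov_nonincreasing_second
    (t₀ : ℝ) (ht₀ : 1 ≤ t₀) (f ft : ℝ → ℝ → ℝ)
    (hf_cont : ContinuousOn (fun p : ℝ × ℝ => f p.1 p.2) (Set.Ici t₀ ×ˢ Set.univ))
    (hft : ∀ w : ℝ, ∀ t ∈ Set.Ici t₀,
      HasDerivWithinAt (fun s => f s w) (ft t w) (Set.Ici t₀) t)
    (hft_cont : ContinuousOn (fun p : ℝ × ℝ => ft p.1 p.2) (Set.Ici t₀ ×ˢ Set.univ))
    (hsign : ∀ t ∈ Set.Ici t₀, ∀ w : ℝ, w ≠ 0 → w * (3 * f t w + t * ft t w) ≤ 0)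
    (Tinf : EReal) (hT : (t₀ : EReal) < Tinf)
    (u v : ℝ → ℝ)
    (hu : ∀ t : ℝ, t₀ ≤ t → (t : EReal) < Tinf → HasDerivAt u (-(t * f t (v t))) t)
    (hv : ∀ t : ℝ, t₀ ≤ t → (t : EReal) < Tinf → HasDerivAt v (u t / t ^ 2) t) :
    (∀ t : ℝ, t₀ ≤ t → (t : EReal) < Tinf →
      HasDerivWithinAt (fun τ => u τ ^ 2 / 2 + τ ^ 3 * ∫ s in (0 : ℝ)..(v τ), f τ s)
        (t ^ 2 * ∫ s in (0 : ℝ)..(v t), 3 * f t s + t * ft t s)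
        {r : ℝ | t₀ ≤ r ∧ (r : EReal) < Tinf} t ∧
      t ^ 2 * (∫ s in (0 : ℝ)..(v t), 3 * f t s + t * ft t s) ≤ 0) ∧
    AntitoneOn (fun τ => u τ ^ 2 / 2 + τ ^ 3 * ∫ s in (0 : ℝ)..(v τ), f τ s)
      {r : ℝ | t₀ ≤ r ∧ (r : EReal) < Tinf} := by
  set S : Set ℝ := {r : ℝ | t₀ ≤ r ∧ (r : EReal) < Tinf} with hSdef
  set fe : ℝ → ℝ → ℝ := fun τ s => f (max τ t₀) s with hfedef
  set fte : ℝ → ℝ → ℝ := fun τ s => ft (max τ t₀) s with hftedef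
  have hfe : Continuous fun p : ℝ × ℝ => fe p.1 p.2 :=
    hf_cont.comp_continuous ((continuous_fst.max continuous_const).prodMk continuous_snd)
      fun p => Set.mem_prod.mpr ⟨Set.mem_Ici.mpr (le_max_right _ _), Set.mem_univ _⟩
  have hfte : Continuous fun p : ℝ × ℝ => fte p.1 p.2 :=
    hft_cont.comp_continuous ((continuous_fst.max continuous_const).prodMk continuous_snd)
      fun p => Set.mem_prod.mpr ⟨Set.mem_Ici.mpr (le_max_right _ _), Set.mem_univ _⟩
  have hder : ∀ s : ℝ, ∀ σ ∈ Set.Ici t₀,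
      HasDerivWithinAt (fun σ => fe σ s) (fte σ s) (Set.Ici t₀) σ := by
    intro s σ hσ
    have h1 : fte σ s = ft σ s := by simp [hftedef, max_eq_left (Set.mem_Ici.mp hσ)]
    rw [h1]
    exact (hft s σ hσ).congr (fun x hx => by simp [hfedef, max_eq_left (Set.mem_Ici.mp hx)])
      (by simp [hfedef, max_eq_left (Set.mem_Ici.mp hσ)])
  have hSsub : S ⊆ Set.Ici t₀ := fun r hr => hr.1
  have key : ∀ t : ℝ, t₀ ≤ t → (t : EReal) < Tinf →
      HasDerivWithinAt (fun τ => u τ ^ 2 / 2 + τ ^ 3 * ∫ s in (0:ℝ)..v τ, f τ s)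
        (t ^ 2 * ∫ s in (0:ℝ)..v t, 3 * f t s + t * ft t s) S t := by
    intro t ht hTt
    have ht0 : (0:ℝ) < t := lt_of_lt_of_le one_pos (le_trans ht₀ ht)
    have hcf : Continuous fun s => f t s :=
      hf_cont.comp_continuous (continuous_const.prodMk continuous_id)
        fun s => Set.mem_prod.mpr ⟨ht, Set.mem_univ _⟩
    have hcft : Continuous fun s => ft t s :=
      hft_cont.comp_continuous (continuous_const.prodMk continuous_id)
        fun s => Set.mem_prod.mpr ⟨ht, Set.mem_univ _⟩
    have hgd := aux_deriv hfe hfte hder ht (hv t ht hTt)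
    have hu2 : HasDerivAt (fun τ => u τ ^ 2 / 2) (u t * -(t * f t (v t))) t := by
      have h := ((hu t ht hTt).pow 2).div_const 2
      convert h using 1
      · rfl
      · rfl
      · rfl
      push_cast
      ring
    have hcube : HasDerivAt (fun τ : ℝ => τ ^ 3) (3 * t ^ 2) t := by
      simpa using hasDerivAt_pow 3 t
    have hprod := hcube.hasDerivWithinAt.mul hgd
    have hsum := hu2.hasDerivWithinAt.add hprod
    have hfeq : ∀ s : ℝ, fe t s = f t s := fun s => by simp [hfedef, max_eq_left ht]
    have hfteq : ∀ s : ℝ, fte t s = ft t s := fun s => by simp [hftedef, max_eq_left ht]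
    have hVt : HasDerivWithinAt (fun τ => u τ ^ 2 / 2 + τ ^ 3 * ∫ s in (0:ℝ)..v τ, fe τ s)
        (t ^ 2 * ∫ s in (0:ℝ)..v t, 3 * f t s + t * ft t s) (Set.Ici t₀) t := by
      convert hsum using 1
      · rfl
      · rfl
      · rfl
      have hint1 : IntervalIntegrable (fun s => 3 * f t s) MeasureTheory.volume 0 (v t) :=
        (continuous_const.mul hcf).intervalIntegrable _ _
      have hint2 : IntervalIntegrable (fun s => t * ft t s) MeasureTheory.volume 0 (v t) :=
        (continuous_const.mul hcft).intervalIntegrable _ _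
      have hsplit : (∫ s in (0:ℝ)..v t, 3 * f t s + t * ft t s)
          = 3 * (∫ s in (0:ℝ)..v t, f t s) + t * (∫ s in (0:ℝ)..v t, ft t s) := by
        rw [← intervalIntegral.integral_const_mul, ← intervalIntegral.integral_const_mul,
          ← intervalIntegral.integral_add hint1 hint2]
      simp only [hfeq, hfteq]
      rw [hsplit]
      field_simp
      ring
    refine (hVt.mono hSsub).congr ?_ ?_
    · intro τ hτ
      have h1 : ∀ s : ℝ, fe τ s = f τ s := fun s => by simp [hfedef, max_eq_left (Set.mem_Ici.mp (hSsub hτ))]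
      simp only [h1]
    · simp only [hfeq]
  have sign : ∀ t : ℝ, t₀ ≤ t →
      t ^ 2 * (∫ s in (0:ℝ)..v t, 3 * f t s + t * ft t s) ≤ 0 := by
    intro t ht
    have hcf : Continuous fun s => f t s :=
      hf_cont.comp_continuous (continuous_const.prodMk continuous_id)
        fun s => Set.mem_prod.mpr ⟨ht, Set.mem_univ _⟩
    have hcft : Continuous fun s => ft t s :=
      hft_cont.comp_continuous (continuous_const.prodMk continuous_id)
        fun s => Set.mem_prod.mpr ⟨ht, Set.mem_univ _⟩
    have hφc : Continuous fun s => 3 * f t s + t * ft t s :=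
      (continuous_const.mul hcf).add (continuous_const.mul hcft)
    have hneg : ∀ s : ℝ, 0 < s → 3 * f t s + t * ft t s ≤ 0 := by
      intro s hs
      have := hsign t ht s (ne_of_gt hs)
      nlinarith
    have hpos : ∀ s : ℝ, s < 0 → 0 ≤ 3 * f t s + t * ft t s := by
      intro s hs
      have := hsign t ht s (ne_of_lt hs)
      nlinarith
    have hφ0le : 3 * f t 0 + t * ft t 0 ≤ 0 := by
      have htend : Filter.Tendsto (fun s => 3 * f t s + t * ft t s)
          (nhdsWithin 0 (Set.Ioi 0)) (nhds (3 * f t 0 + t * ft t 0)) :=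
        (hφc.tendsto 0).mono_left nhdsWithin_le_nhds
      apply le_of_tendsto htend
      filter_upwards [self_mem_nhdsWithin] with s hs
      exact hneg s hs
    have hφ0ge : 0 ≤ 3 * f t 0 + t * ft t 0 := by
      have htend : Filter.Tendsto (fun s => 3 * f t s + t * ft t s)
          (nhdsWithin 0 (Set.Iio 0)) (nhds (3 * f t 0 + t * ft t 0)) :=
        (hφc.tendsto 0).mono_left nhdsWithin_le_nhds
      apply ge_of_tendsto htend
      filter_upwards [self_mem_nhdsWithin] with s hs
      exact hpos s hs
    have hInt : (∫ s in (0:ℝ)..v t, 3 * f t s + t * ft t s) ≤ 0 := by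
      rcases le_or_gt 0 (v t) with h | h
      · have h1 : 0 ≤ ∫ s in (0:ℝ)..v t, -(3 * f t s + t * ft t s) := by
          apply intervalIntegral.integral_nonneg h
          intro s hs
          rcases hs.1.eq_or_lt with he | hlt
          · rw [← he]; linarith
          · linarith [hneg s hlt]
        rw [intervalIntegral.integral_neg] at h1
        linarith
      · have h1 : 0 ≤ ∫ s in (v t)..0, 3 * f t s + t * ft t s := by
          apply intervalIntegral.integral_nonneg h.le
          intro s hs
          rcases hs.2.eq_or_lt with he | hlt
          · rw [he]; linarith
          · exact hpos s hlt
        rw [intervalIntegral.integral_symm] at h1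
        linarith
    nlinarith [sq_nonneg t, hInt]
  refine ⟨fun t ht hTt => ⟨key t ht hTt, sign t ht⟩, ?_⟩
  have hconv : Convex ℝ S := by
    apply Set.OrdConnected.convex
    constructor
    intro x hx y hy z hz
    exact ⟨hx.1.trans hz.1, lt_of_le_of_lt (EReal.coe_le_coe_iff.mpr hz.2) hy.2⟩
  apply antitoneOn_of_deriv_nonpos hconv
  · intro x hx
    exact (key x hx.1 hx.2).continuousWithinAt
  · intro x hx
    have hxS : x ∈ S := interior_subset hx
    exact ((key x hxS.1 hxS.2).hasDerivAt
      (mem_interior_iff_mem_nhds.mp hx)).differentiableAt.differentiableWithinAt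
  · intro x hx
    have hxS : x ∈ S := interior_subset hx
    rw [((key x hxS.1 hxS.2).hasDerivAt (mem_interior_iff_mem_nhds.mp hx)).deriv]
    exact sign x hxS.1
end

section
/- Let f : [t₀,∞) × ℝ → ℝ (t₀ ≥ 1) be continuous with continuous partial derivative ∂f/∂t, and assume v·f(t,v) ≥ 0 and v·[3f(t,v) + t·(∂f/∂t)(t,v)] ≤ 0 for all t ≥ t₀ and all v ≠ 0. Then for any solution (u,v) of the system u′ = −t f(t,v), v′ = u/t² on [t₀,T), one has |u(t)| ≤ √(2V₀) for all t ∈ [t₀,T), where V₀ = u(t₀)²/2 + t₀³·∫_{0}^{v(t₀)} f(t₀,s) ds. -/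
open Filter Set
open MeasureTheory intervalIntegral
open scoped Interval

lemma uBnd.abs_sub_le_of_mem_uIoc {a b s : ℝ} (h : s ∈ Ι a b) : |s - a| ≤ |b - a| := by
  rcases Set.mem_uIoc.mp h with ⟨h1, h2⟩ | ⟨h1, h2⟩
  · rw [abs_of_pos (by linarith), abs_of_pos (by linarith)]; linarith
  · rw [abs_of_nonpos (by linarith), abs_of_neg (by linarith)]; linarith

lemma uBnd.integral_nonneg_of_sign (g : ℝ → ℝ) (b : ℝ)
    (h : ∀ s : ℝ, s ≠ 0 → 0 ≤ s * g s) : 0 ≤ ∫ s in (0:ℝ)..b, g s := by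
  have h0 : ∀ᵐ s : ℝ, s ≠ (0:ℝ) := by
    rw [MeasureTheory.ae_iff]
    have : {s : ℝ | ¬ s ≠ 0} = {(0:ℝ)} := by ext s; simp
    rw [this]; exact Real.volume_singleton
  rcases le_or_gt 0 b with hb | hb
  · apply intervalIntegral.integral_nonneg_of_ae_restrict hb
    have key : ∀ᵐ s ∂(volume.restrict (Icc (0:ℝ) b)), 0 ≤ g s := by
      rw [MeasureTheory.ae_restrict_iff' measurableSet_Icc]
      filter_upwards [h0] with s hs hsmem
      have hsp : 0 < s := lt_of_le_of_ne hsmem.1 (Ne.symm hs)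
      nlinarith [h s hs]
    filter_upwards [key] with s hs using hs
  · have h2 : 0 ≤ ∫ s in b..(0:ℝ), -g s := by
      apply intervalIntegral.integral_nonneg_of_ae_restrict hb.le
      have key : ∀ᵐ s ∂(volume.restrict (Icc b (0:ℝ))), 0 ≤ -g s := by
        rw [MeasureTheory.ae_restrict_iff' measurableSet_Icc]
        filter_upwards [h0] with s hs hsmem
        have hsn : s < 0 := lt_of_le_of_ne hsmem.2 hs
        nlinarith [h s hs]
      filter_upwards [key] with s hs using hs
    rw [intervalIntegral.integral_neg] at h2
    rw [intervalIntegral.integral_symm]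
    linarith

/-- Under `v·f(t,v) ≥ 0` and `v·[3f(t,v) + t·∂f/∂t(t,v)] ≤ 0` (for `v ≠ 0`),
any solution `(u, v)` of the system `u′ = −t f(t,v)`, `v′ = u/t²` on `[t₀, T)` satisfies
`|u(t)| ≤ √(2V₀)` with `V₀ = u(t₀)²/2 + t₀³·∫_0^{v(t₀)} f(t₀, s) ds`. -/
theorem u_bounded_via_second_lyapunov
    (t₀ : ℝ) (ht₀ : 1 ≤ t₀) (f ft : ℝ → ℝ → ℝ)
    (hf_cont : ContinuousOn (fun p : ℝ × ℝ => f p.1 p.2) (Set.Ici t₀ ×ˢ Set.univ))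
    (hft : ∀ w : ℝ, ∀ t ∈ Set.Ici t₀,
      HasDerivWithinAt (fun s => f s w) (ft t w) (Set.Ici t₀) t)
    (hft_cont : ContinuousOn (fun p : ℝ × ℝ => ft p.1 p.2) (Set.Ici t₀ ×ˢ Set.univ))
    (hsign : ∀ t ∈ Set.Ici t₀, ∀ w : ℝ, w ≠ 0 → 0 ≤ w * f t w)
    (hsign' : ∀ t ∈ Set.Ici t₀, ∀ w : ℝ, w ≠ 0 → w * (3 * f t w + t * ft t w) ≤ 0)
    (Tinf : EReal) (hT : (t₀ : EReal) < Tinf)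
    (u v : ℝ → ℝ)
    (hu : ∀ t : ℝ, t₀ ≤ t → (t : EReal) < Tinf → HasDerivAt u (-(t * f t (v t))) t)
    (hv : ∀ t : ℝ, t₀ ≤ t → (t : EReal) < Tinf → HasDerivAt v (u t / t ^ 2) t) :
    ∀ t : ℝ, t₀ ≤ t → (t : EReal) < Tinf →
      |u t| ≤ Real.sqrt (2 * (u t₀ ^ 2 / 2 + t₀ ^ 3 * ∫ s in (0 : ℝ)..(v t₀), f t₀ s)) := by
  -- continuity of the slices
  have hfc : ∀ τ : ℝ, t₀ ≤ τ → Continuous fun s => f τ s := by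
    intro τ hτ
    rw [← continuousOn_univ]
    exact hf_cont.comp ((continuous_const.prodMk continuous_id :
      Continuous fun s : ℝ => (τ, s)).continuousOn) fun s _ => Set.mk_mem_prod hτ trivial
  have hftc : ∀ τ : ℝ, t₀ ≤ τ → Continuous fun s => ft τ s := by
    intro τ hτ
    rw [← continuousOn_univ]
    exact hft_cont.comp ((continuous_const.prodMk continuous_id :
      Continuous fun s : ℝ => (τ, s)).continuousOn) fun s _ => Set.mk_mem_prod hτ trivial
  have hfint : ∀ τ : ℝ, t₀ ≤ τ → ∀ a b : ℝ, IntervalIntegrable (fun s => f τ s) volume a b :=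
    fun τ hτ a b => (hfc τ hτ).intervalIntegrable a b
  -- the Lyapunov function
  set V : ℝ → ℝ := fun τ => u τ ^ 2 / 2 + τ ^ 3 * ∫ s in (0:ℝ)..v τ, f τ s with hVdef
  -- derivative of the parameter part
  have hA : ∀ x : ℝ, t₀ < x → ∀ b : ℝ,
      HasDerivAt (fun τ => ∫ s in (0:ℝ)..b, f τ s) (∫ s in (0:ℝ)..b, ft x s) x := by
    intro x hx b
    obtain ⟨ε', hε'⟩ : ∃ e : ℝ, e = (x - t₀) / 2 := ⟨_, rfl⟩
    have hε'pos : 0 < ε' := by rw [hε']; linarith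
    have hKsub : Icc (x - ε') (x + ε') ×ˢ uIcc (0:ℝ) b ⊆ Ici t₀ ×ˢ (univ : Set ℝ) := by
      rintro ⟨τ, s⟩ ⟨hτ, -⟩
      refine Set.mk_mem_prod ?_ trivial
      have h1 := hτ.1
      simp only [mem_Ici]
      rw [hε'] at h1
      linarith
    obtain ⟨M, hM⟩ := ((isCompact_Icc (a := x - ε') (b := x + ε')).prod
      (isCompact_uIcc (a := (0:ℝ)) (b := b))).exists_bound_of_continuousOn
      (hft_cont.mono hKsub)
    have hball : ∀ τ ∈ Metric.ball x ε', t₀ < τ ∧ τ ∈ Icc (x - ε') (x + ε') := by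
      intro τ hτ
      rw [Real.ball_eq_Ioo] at hτ
      refine ⟨?_, ⟨hτ.1.le, hτ.2.le⟩⟩
      have h1 := hτ.1
      rw [hε'] at h1
      linarith
    refine (intervalIntegral.hasDerivAt_integral_of_dominated_loc_of_deriv_le
      (F := fun τ s => f τ s) (F' := fun τ s => ft τ s) (bound := fun _ => M)
      (Metric.ball_mem_nhds x hε'pos) ?_ (hfint x hx.le 0 b) ?_ ?_ ?_ ?_).2
    · filter_upwards [Ioi_mem_nhds hx] with τ hτ
      exact (hfc τ (le_of_lt hτ)).aestronglyMeasurable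
    · exact (hftc x hx.le).aestronglyMeasurable
    · refine MeasureTheory.ae_of_all _ fun s hs τ hτ => hM (τ, s) ?_
      exact Set.mk_mem_prod (hball τ hτ).2 (uIoc_subset_uIcc hs)
    · exact intervalIntegrable_const
    · refine MeasureTheory.ae_of_all _ fun s hs τ hτ => ?_
      exact (hft s τ (le_of_lt (hball τ hτ).1)).hasDerivAt
        (Ici_mem_nhds (hball τ hτ).1)
  -- derivative of the moving-endpoint part
  have hB : ∀ x : ℝ, t₀ < x → (x : EReal) < Tinf →
      HasDerivAt (fun τ => ∫ s in (v x)..(v τ), f τ s) (f x (v x) * (u x / x ^ 2)) x := by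
    intro x hx hxT
    have hvd : HasDerivAt v (u x / x ^ 2) x := hv x hx.le hxT
    have key : (fun τ => (∫ s in (v x)..(v τ), f τ s) - f x (v x) * (v τ - v x))
        =o[nhds x] fun τ => v τ - v x := by
      rw [Asymptotics.isLittleO_iff]
      intro c hc
      have hcont : ContinuousAt (fun p : ℝ × ℝ => f p.1 p.2) (x, v x) :=
        hf_cont.continuousAt (prod_mem_nhds (Ici_mem_nhds hx) univ_mem)
      have hev : ∀ᶠ p : ℝ × ℝ in nhds (x, v x), ‖f p.1 p.2 - f x (v x)‖ ≤ c := by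
        have hev0 : ∀ᶠ y in nhds (f x (v x)), ‖y - f x (v x)‖ ≤ c := by
          filter_upwards [Metric.closedBall_mem_nhds (f x (v x)) hc] with y hy
          rwa [Metric.mem_closedBall, dist_eq_norm] at hy
        exact hcont.eventually hev0
      rw [Metric.eventually_nhds_iff] at hev
      obtain ⟨δ, hδ, hδf⟩ := hev
      have hvc : ContinuousAt v x := hvd.continuousAt
      have h1 : ∀ᶠ τ in nhds x, |v τ - v x| < δ / 2 := by
        have := hvc.eventually (p := fun y => |y - v x| < δ / 2) ?_
        · exact this
        · filter_upwards [Metric.ball_mem_nhds (v x) (half_pos hδ)] with y hy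
          rwa [Metric.mem_ball, Real.dist_eq] at hy
      filter_upwards [h1, Metric.ball_mem_nhds x (half_pos hδ), Ioi_mem_nhds hx]
        with τ hτ1 hτ2 hτ3
      have hint1 : IntervalIntegrable (fun s => f τ s) volume (v x) (v τ) :=
        hfint τ (le_of_lt hτ3) _ _
      have heq : (∫ s in (v x)..(v τ), f τ s) - f x (v x) * (v τ - v x)
          = ∫ s in (v x)..(v τ), (f τ s - f x (v x)) := by
        rw [intervalIntegral.integral_sub hint1 intervalIntegrable_const,
          intervalIntegral.integral_const]
        simp [smul_eq_mul]
        ring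
      rw [heq]
      have hbd : ∀ s ∈ Ι (v x) (v τ), ‖f τ s - f x (v x)‖ ≤ c := by
        intro s hs
        apply hδf (y := (τ, s))
        rw [Prod.dist_eq]
        apply max_lt
        · rw [Metric.mem_ball] at hτ2
          linarith
        · rw [Real.dist_eq]
          calc |s - v x| ≤ |v τ - v x| := uBnd.abs_sub_le_of_mem_uIoc hs
            _ < δ := by linarith
      calc ‖∫ s in (v x)..(v τ), (f τ s - f x (v x))‖ ≤ c * |v τ - v x| :=
            intervalIntegral.norm_integral_le_of_norm_le_const hbd
        _ = c * ‖v τ - v x‖ := by rw [Real.norm_eq_abs]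
    have hO : (fun τ => v τ - v x) =O[nhds x] fun τ => τ - x :=
      hvd.hasFDerivAt.isBigO_sub
    have h2 : (fun τ => v τ - v x - (τ - x) • (u x / x ^ 2)) =o[nhds x] fun τ => τ - x :=
      hasDerivAt_iff_isLittleO.mp hvd
    have h3 := h2.const_mul_left (f x (v x))
    have h4 := (key.trans_isBigO hO).add h3
    rw [hasDerivAt_iff_isLittleO]
    have heq2 : ∀ τ : ℝ,
        ((∫ s in (v x)..(v τ), f τ s) - f x (v x) * (v τ - v x))
          + f x (v x) * (v τ - v x - (τ - x) • (u x / x ^ 2))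
        = (∫ s in (v x)..(v τ), f τ s) - (∫ s in (v x)..(v x), f x s)
          - (τ - x) • (f x (v x) * (u x / x ^ 2)) := by
      intro τ
      rw [intervalIntegral.integral_same]
      simp only [smul_eq_mul]
      ring
    exact h4.congr heq2 fun τ => rfl
  -- derivative of V
  have hV' : ∀ x : ℝ, t₀ < x → (x : EReal) < Tinf →
      HasDerivAt V (x ^ 2 * ∫ s in (0:ℝ)..v x, (3 * f x s + x * ft x s)) x := by
    intro x hx hxT
    have hx0 : (0:ℝ) < x := by linarith
    -- derivative of the integral term with moving endpoint
    have hg' : HasDerivAt (fun τ => ∫ s in (0:ℝ)..v τ, f τ s)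
        ((∫ s in (0:ℝ)..v x, ft x s) + f x (v x) * (u x / x ^ 2)) x := by
      have h1 := hA x hx (v x)
      have h2 := hB x hx hxT
      have h12 := h1.add h2
      apply h12.congr_of_eventuallyEq
      filter_upwards [Ioi_mem_nhds hx] with τ hτ
      exact (intervalIntegral.integral_add_adjacent_intervals
        (hfint τ (le_of_lt hτ) 0 (v x)) (hfint τ (le_of_lt hτ) (v x) (v τ))).symm
    have h1 : HasDerivAt (fun τ => u τ ^ 2 / 2) (u x * (-(x * f x (v x)))) x := by
      have := ((hu x hx.le hxT).pow 2).div_const 2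
      refine this.congr_deriv ?_
      norm_num <;> ring
    have h2 : HasDerivAt (fun τ : ℝ => τ ^ 3 * ∫ s in (0:ℝ)..v τ, f τ s)
        (3 * x ^ 2 * (∫ s in (0:ℝ)..v x, f x s)
          + x ^ 3 * ((∫ s in (0:ℝ)..v x, ft x s) + f x (v x) * (u x / x ^ 2))) x := by
      have ha : HasDerivAt (fun τ : ℝ => τ ^ 3) (3 * x ^ 2) x := by
        simpa using hasDerivAt_pow 3 x
      exact ha.mul hg'
    have hsum := h1.add h2
    rw [hVdef]
    refine hsum.congr_deriv ?_
    have hsplit : ∫ s in (0:ℝ)..v x, (3 * f x s + x * ft x s)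
        = 3 * (∫ s in (0:ℝ)..v x, f x s) + x * ∫ s in (0:ℝ)..v x, ft x s := by
      rw [intervalIntegral.integral_add (f := fun s => 3 * f x s) (g := fun s => x * ft x s) ((continuous_const.mul (hfc x hx.le)).intervalIntegrable 0 (v x))
        ((continuous_const.mul (hftc x hx.le)).intervalIntegrable 0 (v x)),
        intervalIntegral.integral_const_mul, intervalIntegral.integral_const_mul]
    rw [hsplit]
    have hx2 : x ^ 2 ≠ 0 := by positivity
    field_simp
    ring
  -- continuity of V at t₀ from the right
  have hVc : ContinuousWithinAt V (Set.Ici t₀) t₀ := by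
    have hIcc : Icc t₀ (t₀ + 1) ∈ nhdsWithin t₀ (Set.Ici t₀) := by
      rw [← Set.Ici_inter_Iic]
      exact Filter.inter_mem self_mem_nhdsWithin
        (mem_nhdsWithin_of_mem_nhds (Iic_mem_nhds (by linarith)))
    -- continuity of the fixed-endpoint part
    have hA0 : ContinuousWithinAt (fun τ => ∫ s in (0:ℝ)..v t₀, f τ s) (Set.Ici t₀) t₀ := by
      obtain ⟨M, hM⟩ := ((isCompact_Icc (a := t₀) (b := t₀ + 1)).prod
        (isCompact_uIcc (a := (0:ℝ)) (b := v t₀))).exists_bound_of_continuousOn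
        (hf_cont.mono (by rintro ⟨τ, s⟩ ⟨hτ, -⟩; exact Set.mk_mem_prod hτ.1 trivial))
      apply intervalIntegral.continuousWithinAt_of_dominated_interval (bound := fun _ => M)
      · filter_upwards [self_mem_nhdsWithin] with τ hτ
        exact (hfc τ hτ).aestronglyMeasurable
      · filter_upwards [hIcc] with τ hτ
        exact MeasureTheory.ae_of_all _ fun s hs =>
          hM (τ, s) (Set.mk_mem_prod hτ (uIoc_subset_uIcc hs))
      · exact intervalIntegrable_const
      · refine MeasureTheory.ae_of_all _ fun s _ => ?_
        exact ContinuousWithinAt.comp (g := fun p : ℝ × ℝ => f p.1 p.2)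
          (f := fun τ : ℝ => (τ, s)) (s := Set.Ici t₀) (t := Set.Ici t₀ ×ˢ Set.univ)
          (hf_cont (t₀, s) (Set.mk_mem_prod (le_refl t₀) trivial))
          ((continuous_id.prodMk continuous_const :
            Continuous fun τ : ℝ => (τ, s)).continuousWithinAt)
          fun τ hτ => Set.mk_mem_prod hτ trivial
    -- the moving part tends to 0
    have hvc : ContinuousAt v t₀ := (hv t₀ le_rfl hT).continuousAt
    have hB0 : Tendsto (fun τ => ∫ s in (v t₀)..(v τ), f τ s)
        (nhdsWithin t₀ (Set.Ici t₀)) (nhds 0) := by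
      obtain ⟨M, hM⟩ := ((isCompact_Icc (a := t₀) (b := t₀ + 1)).prod
        (isCompact_Icc (a := v t₀ - 1) (b := v t₀ + 1))).exists_bound_of_continuousOn
        (hf_cont.mono (by rintro ⟨τ, s⟩ ⟨hτ, -⟩; exact Set.mk_mem_prod hτ.1 trivial))
      have hv1 : ∀ᶠ τ in nhdsWithin t₀ (Set.Ici t₀), |v τ - v t₀| ≤ 1 := by
        apply Filter.Eventually.filter_mono nhdsWithin_le_nhds
        have := hvc.eventually (p := fun y => |y - v t₀| ≤ 1) ?_
        · exact this
        · filter_upwards [Metric.closedBall_mem_nhds (v t₀) one_pos] with y hy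
          rwa [Metric.mem_closedBall, Real.dist_eq] at hy
      apply squeeze_zero_norm' (a := fun τ => M * |v τ - v t₀|)
      · filter_upwards [hIcc, hv1] with τ hτ1 hτ2
        apply intervalIntegral.norm_integral_le_of_norm_le_const
        intro s hs
        apply hM (τ, s)
        refine Set.mk_mem_prod hτ1 ?_
        have h5 : |s - v t₀| ≤ |v τ - v t₀| := uBnd.abs_sub_le_of_mem_uIoc hs
        constructor
        · have := abs_le.mp (le_trans h5 hτ2)
          linarith [this.1]
        · have := abs_le.mp (le_trans h5 hτ2)
          linarith [this.2]
      · have : Tendsto (fun τ => M * |v τ - v t₀|) (nhdsWithin t₀ (Set.Ici t₀))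
            (nhds (M * |v t₀ - v t₀|)) := by
          apply Tendsto.const_mul
          exact (((hvc.tendsto.mono_left nhdsWithin_le_nhds).sub tendsto_const_nhds).abs)
        simpa using this
    -- combine
    have hG : ContinuousWithinAt (fun τ => ∫ s in (0:ℝ)..v τ, f τ s) (Set.Ici t₀) t₀ := by
      have hsum := hA0.tendsto.add hB0
      rw [add_zero] at hsum
      have heq : (fun τ => (∫ s in (0:ℝ)..v t₀, f τ s) + ∫ s in (v t₀)..(v τ), f τ s)
          =ᶠ[nhdsWithin t₀ (Set.Ici t₀)] fun τ => ∫ s in (0:ℝ)..v τ, f τ s := by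
        filter_upwards [self_mem_nhdsWithin] with τ hτ
        exact intervalIntegral.integral_add_adjacent_intervals
          (hfint τ hτ 0 (v t₀)) (hfint τ hτ (v t₀) (v τ))
      exact hsum.congr' heq
    rw [hVdef]
    exact (((hu t₀ le_rfl hT).continuousAt.continuousWithinAt.pow 2).div_const 2).add
      (((continuous_pow 3).continuousWithinAt).mul hG)
  -- conclusion
  intro t htt₀ htT
  have key : V t ≤ V t₀ := by
    rcases eq_or_lt_of_le htt₀ with rfl | hlt
    · exact le_rfl
    have hmem : ∀ x ∈ Icc t₀ t, (x : EReal) < Tinf := fun x hx =>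
      lt_of_le_of_lt (EReal.coe_le_coe_iff.mpr hx.2) htT
    have hanti : AntitoneOn V (Icc t₀ t) := by
      apply antitoneOn_of_deriv_nonpos (convex_Icc _ _)
      · intro x hx
        rcases eq_or_lt_of_le hx.1 with rfl | hxlt
        · exact hVc.mono Icc_subset_Ici_self
        · exact ((hV' x hxlt (hmem x hx)).continuousAt).continuousWithinAt
      · intro x hx
        rw [interior_Icc] at hx
        exact ((hV' x hx.1 (hmem x ⟨hx.1.le, hx.2.le⟩)).differentiableAt).differentiableWithinAt
      · intro x hx
        rw [interior_Icc] at hx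
        rw [(hV' x hx.1 (hmem x ⟨hx.1.le, hx.2.le⟩)).deriv]
        have hxt₀ : x ∈ Set.Ici t₀ := le_of_lt hx.1
        have hneg : (∫ s in (0:ℝ)..v x, (3 * f x s + x * ft x s)) ≤ 0 := by
          have h6 : 0 ≤ ∫ s in (0:ℝ)..v x, -(3 * f x s + x * ft x s) := by
            apply uBnd.integral_nonneg_of_sign
            intro s hs
            have := hsign' x hxt₀ s hs
            nlinarith
          rw [intervalIntegral.integral_neg] at h6
          linarith
        exact mul_nonpos_of_nonneg_of_nonpos (sq_nonneg x) hneg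
    exact hanti ⟨le_rfl, htt₀⟩ ⟨htt₀, le_rfl⟩ htt₀
  have hpos : 0 ≤ ∫ s in (0:ℝ)..v t, f t s :=
    uBnd.integral_nonneg_of_sign _ _ fun s hs => hsign t htt₀ s hs
  have ht3 : 0 ≤ t ^ 3 := by
    have : (0:ℝ) < t := by linarith
    positivity
  have hsq : u t ^ 2 ≤ 2 * V t₀ := by
    have h1 : u t ^ 2 / 2 ≤ V t := by
      have h2 : 0 ≤ t ^ 3 * ∫ s in (0:ℝ)..v t, f t s := mul_nonneg ht3 hpos
      show u t ^ 2 / 2 ≤ u t ^ 2 / 2 + t ^ 3 * ∫ s in (0:ℝ)..v t, f t s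
      linarith
    have h3 : u t ^ 2 / 2 ≤ V t₀ := le_trans h1 key
    clear_value V
    linarith
  have : |u t| ≤ Real.sqrt (2 * V t₀) := by
    rw [← Real.sqrt_sq_eq_abs]
    exact Real.sqrt_le_sqrt hsq
  simpa [hVdef] using this
end

section
/- Under the hypotheses of the main boundedness theorem — f : [t₀,∞) × ℝ → ℝ continuous with continuous ∂f/∂v, v·f(t,v) ≤ 0, ∂f/∂v(t,v) ≤ 0, |f(t,v)| ≤ a(t)g(|v|) with a ≥ 0 continuous, g : [0,∞) → [0,∞) continuous nondecreasing and positive on (0,∞), K = ∫_{t₀}^{∞} t a(t) dt < ∞, ∫_{1}^{∞} dξ/g(ξ) < ∞ — every solution (u,v) of the system u′ = −t f(t,v), v′ = u/t² whose initial data satisfy (4/t₀)(K + c/g(1)) < ∫_{1+|v(t₀)|}^{∞} dξ/g(ξ), where c = 1 + u(t₀)²/2, has u bounded on its maximal interval of existence. -/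
open Filter Set MeasureTheory

set_option maxHeartbeats 1000000 in
/-- Main boundedness step: under the hypotheses of Theorem 1 (`f` continuous with
continuous `∂f/∂v`, `v·f(t,v) ≤ 0`, `∂f/∂v ≤ 0`, `|f(t,v)| ≤ a(t)g(|v|)` with `a ≥ 0`
continuous, `g` continuous, nonnegative, nondecreasing, positive on `(0,∞)`,
`K = ∫_{t₀}^{∞} t a(t) dt < ∞`, `∫_1^{∞} dξ/g(ξ) < ∞`), every solution `(u, v)` of the
system `u′ = −t f(t,v)`, `v′ = u/t²` whose initial data satisfy
`(4/t₀)(K + c/g(1)) < ∫_{1+|v(t₀)|}^{∞} dξ/g(ξ)` with `c = 1 + u(t₀)²/2` has `u` bounded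
on its interval of existence `[t₀, T∞)`. -/
theorem u_bounded_via_first_lyapunov
    (t₀ : ℝ) (ht₀ : 1 ≤ t₀) (f fv : ℝ → ℝ → ℝ)
    (hf_cont : ContinuousOn (fun p : ℝ × ℝ => f p.1 p.2) (Set.Ici t₀ ×ˢ Set.univ))
    (hfv : ∀ t ∈ Set.Ici t₀, ∀ w : ℝ, HasDerivAt (f t) (fv t w) w)
    (hfv_cont : ContinuousOn (fun p : ℝ × ℝ => fv p.1 p.2) (Set.Ici t₀ ×ˢ Set.univ))
    (hsign : ∀ t ∈ Set.Ici t₀, ∀ w : ℝ, w * f t w ≤ 0)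
    (hfv_nonpos : ∀ t ∈ Set.Ici t₀, ∀ w : ℝ, fv t w ≤ 0)
    (a g : ℝ → ℝ)
    (ha_cont : ContinuousOn a (Set.Ici t₀))
    (ha_nonneg : ∀ t ∈ Set.Ici t₀, 0 ≤ a t)
    (hg_cont : ContinuousOn g (Set.Ici 0))
    (hg_nonneg : ∀ s ∈ Set.Ici (0 : ℝ), 0 ≤ g s)
    (hg_pos : ∀ s : ℝ, 0 < s → 0 < g s)
    (hg_mono : MonotoneOn g (Set.Ici 0))
    (hfg : ∀ t ∈ Set.Ici t₀, ∀ w : ℝ, |f t w| ≤ a t * g |w|)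
    (hK : IntegrableOn (fun t => t * a t) (Set.Ici t₀))
    (hg_int : IntegrableOn (fun ξ => 1 / g ξ) (Set.Ici (1 : ℝ)))
    (Tinf : EReal) (hT : (t₀ : EReal) < Tinf)
    (u v : ℝ → ℝ)
    (hu : ∀ t : ℝ, t₀ ≤ t → (t : EReal) < Tinf → HasDerivAt u (-(t * f t (v t))) t)
    (hv : ∀ t : ℝ, t₀ ≤ t → (t : EReal) < Tinf → HasDerivAt v (u t / t ^ 2) t)
    (hinit : 4 / t₀ * ((∫ t in Set.Ici t₀, t * a t) + (1 + u t₀ ^ 2 / 2) / g 1) <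
      ∫ ξ in Set.Ici (1 + |v t₀|), 1 / g ξ) :
    ∃ U : ℝ, ∀ t : ℝ, t₀ ≤ t → (t : EReal) < Tinf → |u t| ≤ U := by
  have ht₀pos : (0:ℝ) < t₀ := lt_of_lt_of_le one_pos ht₀
  have hg1 : (0:ℝ) < g 1 := hg_pos 1 one_pos
  set c : ℝ := 1 + u t₀ ^ 2 / 2 with hc
  have hc_pos : (0:ℝ) < c := by positivity
  set K : ℝ := ∫ t in Set.Ici t₀, t * a t with hKdef
  have hK0 : 0 ≤ K := setIntegral_nonneg measurableSet_Ici
    (fun t ht => mul_nonneg (ht₀pos.le.trans ht) (ha_nonneg t ht))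
  set M : ℝ := K + c / g 1 with hMdef
  have hM0 : 0 ≤ M := add_nonneg hK0 (div_nonneg hc_pos.le hg1.le)
  set z₀ : ℝ := 1 + |v t₀| with hz₀def
  have hz₀1 : (1:ℝ) ≤ z₀ := le_add_of_nonneg_right (abs_nonneg _)
  have hz₀pos : (0:ℝ) < z₀ := lt_of_lt_of_le one_pos hz₀1
  -- 1/g is continuous and nonnegative on (0,∞)
  have hginv_contOn : ContinuousOn (fun ξ => 1 / g ξ) (Ioi (0:ℝ)) :=
    ContinuousOn.div continuousOn_const (hg_cont.mono Ioi_subset_Ici_self)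
      (fun ξ hξ => (hg_pos ξ hξ).ne')
  have hginv_nonneg : ∀ ξ : ℝ, 0 < ξ → 0 ≤ 1 / g ξ :=
    fun ξ hξ => div_nonneg zero_le_one (hg_pos ξ hξ).le
  -- choose Z with ∫_{z₀}^{Z} 1/g > 4/t₀ * M
  have hgIoi : IntegrableOn (fun ξ => 1 / g ξ) (Ioi z₀) :=
    hg_int.mono_set (fun x hx => le_trans hz₀1 (le_of_lt hx))
  have hlt : 4 / t₀ * M < ∫ ξ in Ioi z₀, 1 / g ξ := by
    rw [← integral_Ici_eq_integral_Ioi]; exact hinit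
  obtain ⟨Z, hz₀Z, hZint⟩ : ∃ Z : ℝ, z₀ < Z ∧ 4 / t₀ * M < ∫ ξ in z₀..Z, 1 / g ξ := by
    have htend := MeasureTheory.intervalIntegral_tendsto_integral_Ioi z₀ hgIoi
      (tendsto_id (x := atTop))
    have h1 : ∀ᶠ b in atTop, 4 / t₀ * M < ∫ ξ in z₀..(id b), 1 / g ξ :=
      htend.eventually (eventually_gt_nhds hlt)
    obtain ⟨b, hb1, hb2⟩ := (h1.and (eventually_gt_atTop z₀)).exists
    exact ⟨b, hb2, hb1⟩
  have hZ1 : (1:ℝ) ≤ Z := hz₀1.trans hz₀Z.le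
  refine ⟨c + K * g Z, ?_⟩
  intro T hT0 hTlt
  -- everything happens on S = Icc t₀ T
  have hmemT : ∀ s ∈ Icc t₀ T, (s : EReal) < Tinf :=
    fun s hs => lt_of_le_of_lt (EReal.coe_le_coe_iff.mpr hs.2) hTlt
  have hu' : ∀ s ∈ Icc t₀ T, HasDerivAt u (-(s * f s (v s))) s :=
    fun s hs => hu s hs.1 (hmemT s hs)
  have hv' : ∀ s ∈ Icc t₀ T, HasDerivAt v (u s / s ^ 2) s :=
    fun s hs => hv s hs.1 (hmemT s hs)
  have hucont : ∀ s ∈ Icc t₀ T, ContinuousAt u s := fun s hs => (hu' s hs).continuousAt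
  have hvcont : ContinuousOn v (Icc t₀ T) :=
    fun s hs => (hv' s hs).continuousAt.continuousWithinAt
  have hspos : ∀ s ∈ Icc t₀ T, (0:ℝ) < s := fun s hs => ht₀pos.trans_le hs.1
  set q : ℝ → ℝ := fun s => |u s| / s ^ 2 with hqdef
  have hq0 : ∀ s : ℝ, 0 ≤ q s := fun s => div_nonneg (abs_nonneg _) (sq_nonneg s)
  have hqcontAt : ∀ s ∈ Icc t₀ T, ContinuousAt q s := fun s hs =>
    ((hucont s hs).abs).div ((continuous_pow 2).continuousAt)
      (pow_ne_zero 2 (hspos s hs).ne')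
  have hqcontOn : ContinuousOn q (Icc t₀ T) :=
    fun s hs => (hqcontAt s hs).continuousWithinAt
  have hqint : ∀ s₁ ∈ Icc t₀ T, ∀ s₂ ∈ Icc t₀ T, s₁ ≤ s₂ →
      IntervalIntegrable q volume s₁ s₂ := fun s₁ hs₁ s₂ hs₂ h12 =>
    (hqcontOn.mono (Icc_subset_Icc hs₁.1 hs₂.2)).intervalIntegrable_of_Icc h12
  set w : ℝ → ℝ := fun s => ∫ r in t₀..s, q r with hwdef
  have hTIcc : T ∈ Icc t₀ T := ⟨hT0, le_rfl⟩
  have ht₀Icc : t₀ ∈ Icc t₀ T := ⟨le_rfl, hT0⟩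
  have hw0 : ∀ s ∈ Icc t₀ T, 0 ≤ w s :=
    fun s hs => intervalIntegral.integral_nonneg hs.1 (fun r _ => hq0 r)
  have hwmono : ∀ s₁ ∈ Icc t₀ T, ∀ s₂ ∈ Icc t₀ T, s₁ ≤ s₂ → w s₁ ≤ w s₂ := by
    intro s₁ hs₁ s₂ hs₂ h12
    have hadd := intervalIntegral.integral_add_adjacent_intervals
      (hqint t₀ ht₀Icc s₁ hs₁ hs₁.1) (hqint s₁ hs₁ s₂ hs₂ h12)
    have hnn : 0 ≤ ∫ r in s₁..s₂, q r :=
      intervalIntegral.integral_nonneg h12 (fun r _ => hq0 r)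
    simp only [hwdef]; linarith [hadd, hnn]
  set z : ℝ → ℝ := fun s => z₀ + w s with hzdef
  have hz₀z : ∀ s ∈ Icc t₀ T, z₀ ≤ z s := fun s hs => le_add_of_nonneg_right (hw0 s hs)
  have hz1 : ∀ s ∈ Icc t₀ T, 1 ≤ z s := fun s hs => hz₀1.trans (hz₀z s hs)
  have hz0' : ∀ s ∈ Icc t₀ T, (0:ℝ) ≤ z s := fun s hs => zero_le_one.trans (hz1 s hs)
  -- bound on |v|
  have hvb : ∀ s ∈ Icc t₀ T, |v s| ≤ |v t₀| + w s := by
    intro s hs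
    have hsub : Icc t₀ s ⊆ Icc t₀ T := Icc_subset_Icc le_rfl hs.2
    have hint : IntervalIntegrable (fun r => u r / r ^ 2) volume t₀ s := by
      apply ContinuousOn.intervalIntegrable_of_Icc hs.1
      intro r hr
      exact (((hucont r (hsub hr)).div ((continuous_pow 2).continuousAt)
        (pow_ne_zero 2 (hspos r (hsub hr)).ne'))).continuousWithinAt
    have hFTC : ∫ r in t₀..s, u r / r ^ 2 = v s - v t₀ := by
      apply intervalIntegral.integral_eq_sub_of_hasDerivAt
      · intro r hr
        rw [uIcc_of_le hs.1] at hr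
        exact hv' r (hsub hr)
      · exact hint
    have habs : |v s - v t₀| ≤ ∫ r in t₀..s, q r := by
      rw [← hFTC]
      calc |∫ r in t₀..s, u r / r ^ 2| ≤ ∫ r in t₀..s, |u r / r ^ 2| :=
            intervalIntegral.abs_integral_le_integral_abs hs.1
        _ = ∫ r in t₀..s, q r := by
            apply intervalIntegral.integral_congr
            intro r hr
            rw [uIcc_of_le hs.1] at hr
            simp only [hqdef, abs_div, abs_of_nonneg (sq_nonneg r)]
    calc |v s| = |v t₀ + (v s - v t₀)| := by ring_nf
      _ ≤ |v t₀| + |v s - v t₀| := abs_add_le _ _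
      _ ≤ |v t₀| + w s := by exact add_le_add_right habs _
  -- ∫ r a r over [t₀, s] is at most K
  have hra_cont : ContinuousOn (fun r => r * a r) (Icc t₀ T) :=
    (continuousOn_id.mul (ha_cont.mono (fun r hr => hr.1)))
  have hIKs : ∀ s ∈ Icc t₀ T, (∫ r in t₀..s, r * a r) ≤ K := by
    intro s hs
    rw [intervalIntegral.integral_of_le hs.1, hKdef]
    apply setIntegral_mono_set hK
    · filter_upwards [ae_restrict_mem measurableSet_Ici] with t ht
      exact mul_nonneg (ht₀pos.le.trans ht) (ha_nonneg t ht)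
    · exact HasSubset.Subset.eventuallyLE (fun x hx => le_of_lt hx.1)
  -- the main pointwise bound on |u|
  have hub : ∀ s ∈ Icc t₀ T, |u s| ≤ c + K * g (z s) := by
    intro s hs
    have hsub : Icc t₀ s ⊆ Icc t₀ T := Icc_subset_Icc le_rfl hs.2
    have hfvr_cont : ContinuousOn (fun r => -(r * f r (v r))) (Icc t₀ s) := by
      apply ContinuousOn.neg
      apply ContinuousOn.mul continuousOn_id
      apply hf_cont.comp (continuousOn_id.prodMk (hvcont.mono hsub))
      intro r hr
      exact ⟨hr.1, mem_univ _⟩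
    have hint : IntervalIntegrable (fun r => -(r * f r (v r))) volume t₀ s :=
      hfvr_cont.intervalIntegrable_of_Icc hs.1
    have hFTC : ∫ r in t₀..s, -(r * f r (v r)) = u s - u t₀ := by
      apply intervalIntegral.integral_eq_sub_of_hasDerivAt
      · intro r hr
        rw [uIcc_of_le hs.1] at hr
        exact hu' r (hsub hr)
      · exact hint
    have hgz_cont : ContinuousOn (fun _ : ℝ => g (z s)) (Icc t₀ s) := continuousOn_const
    have hbd : ∀ r ∈ Icc t₀ s, |(-(r * f r (v r)))| ≤ r * a r * g (z s) := by
      intro r hr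
      have hr' := hsub hr
      have hrpos := hspos r hr'
      have hvr : |v r| ≤ z s := by
        have h1 := hvb r hr'
        have h2 : w r ≤ w s := hwmono r hr' s hs hr.2
        have : |v r| ≤ |v t₀| + w s := h1.trans (by linarith)
        simp only [hzdef, hz₀def]; linarith
      have hgvr : g (|v r|) ≤ g (z s) :=
        hg_mono (mem_Ici.mpr (abs_nonneg _)) (hz0' s hs) hvr
      have hfb := hfg r hr.1 (v r)
      have har := ha_nonneg r hr.1
      calc |(-(r * f r (v r)))| = r * |f r (v r)| := by
            rw [abs_neg, abs_mul, abs_of_nonneg hrpos.le]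
        _ ≤ r * (a r * g (|v r|)) := by
            apply mul_le_mul_of_nonneg_left hfb hrpos.le
        _ ≤ r * (a r * g (z s)) := by
            apply mul_le_mul_of_nonneg_left _ hrpos.le
            exact mul_le_mul_of_nonneg_left hgvr har
        _ = r * a r * g (z s) := by ring
    have habs : |u s - u t₀| ≤ (∫ r in t₀..s, r * a r) * g (z s) := by
      rw [← hFTC]
      have hint2 : IntervalIntegrable (fun r => r * a r * g (z s)) volume t₀ s :=
        (((hra_cont.mono hsub)).mul continuousOn_const).intervalIntegrable_of_Icc hs.1
      calc |∫ r in t₀..s, -(r * f r (v r))| ≤ ∫ r in t₀..s, |(-(r * f r (v r)))| :=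
            intervalIntegral.abs_integral_le_integral_abs hs.1
        _ ≤ ∫ r in t₀..s, r * a r * g (z s) := by
            apply intervalIntegral.integral_mono_on hs.1 _ hint2
            · intro r hr; exact hbd r hr
            · exact (hfvr_cont.abs).intervalIntegrable_of_Icc hs.1
        _ = (∫ r in t₀..s, r * a r) * g (z s) := by
            rw [intervalIntegral.integral_mul_const]
    have hgzs0 : 0 ≤ g (z s) := hg_nonneg _ (hz0' s hs)
    have hKs : (∫ r in t₀..s, r * a r) * g (z s) ≤ K * g (z s) :=
      mul_le_mul_of_nonneg_right (hIKs s hs) hgzs0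
    have hu0 : |u t₀| ≤ c := by
      have h1 : (0:ℝ) ≤ (|u t₀| - 1)^2 := sq_nonneg _
      have h2 : |u t₀|^2 = u t₀ ^ 2 := sq_abs _
      simp only [hc]; nlinarith
    calc |u s| = |u t₀ + (u s - u t₀)| := by ring_nf
      _ ≤ |u t₀| + |u s - u t₀| := abs_add_le _ _
      _ ≤ c + K * g (z s) := add_le_add hu0 (habs.trans hKs)
  -- consequences of monotonicity of g
  have hgz : ∀ s ∈ Icc t₀ T, g 1 ≤ g (z s) :=
    fun s hs => hg_mono (mem_Ici.mpr zero_le_one) (hz0' s hs) (hz1 s hs)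
  have hgzpos : ∀ s ∈ Icc t₀ T, 0 < g (z s) := fun s hs => hg1.trans_le (hgz s hs)
  have hub' : ∀ s ∈ Icc t₀ T, |u s| ≤ M * g (z s) := by
    intro s hs
    have h1 := hub s hs
    have h2 : c ≤ c / g 1 * g (z s) := by
      rw [div_mul_eq_mul_div, le_div_iff₀ hg1]
      exact mul_le_mul_of_nonneg_left (hgz s hs) hc_pos.le
    have h3 : M * g (z s) = K * g (z s) + c / g 1 * g (z s) := by rw [hMdef]; ring
    have h4 : c + K * g (z s) ≤ M * g (z s) := by
      rw [h3, add_comm (K * g (z s))]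
      exact add_le_add_left h2 _
    exact h1.trans h4
  -- continuity of w and of the Bihari primitive
  have hwcont : ContinuousOn w (Icc t₀ T) := by
    have hQ : IntegrableOn q (uIcc t₀ T) volume := by
      rw [uIcc_of_le hT0]
      exact hqcontOn.integrableOn_Icc
    have := intervalIntegral.continuousOn_primitive_interval hQ
    rwa [uIcc_of_le hT0] at this
  set G : ℝ → ℝ := fun y => ∫ ξ in z₀..y, 1 / g ξ with hGdef
  set Y : ℝ := z T with hYdef
  have hzY : ∀ s ∈ Icc t₀ T, z s ∈ Icc z₀ Y := fun s hs =>
    ⟨hz₀z s hs, add_le_add_right (hwmono s hs T hTIcc hs.2) z₀⟩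
  have hIccpos : Icc z₀ Y ⊆ Ioi (0:ℝ) := fun ξ hξ => lt_of_lt_of_le hz₀pos hξ.1
  have hGcont : ContinuousOn G (Icc z₀ Y) := by
    have hQ : IntegrableOn (fun ξ => 1 / g ξ) (uIcc z₀ Y) volume := by
      rw [uIcc_of_le (hzY T hTIcc).1]
      exact (hginv_contOn.mono hIccpos).integrableOn_Icc
    have := intervalIntegral.continuousOn_primitive_interval hQ
    rwa [uIcc_of_le (hzY T hTIcc).1] at this
  set φ : ℝ → ℝ := fun s => G (z s) with hφdef
  have hzcontOn : ContinuousOn z (Icc t₀ T) := continuousOn_const.add hwcont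
  have hφcont : ContinuousOn φ (Icc t₀ T) := hGcont.comp hzcontOn hzY
  set ψ : ℝ → ℝ := fun s => M * (t₀⁻¹ - s⁻¹) - φ s with hψdef
  have hψcont : ContinuousOn ψ (Icc t₀ T) := by
    apply ContinuousOn.sub _ hφcont
    apply continuousOn_const.mul
    apply continuousOn_const.sub
    exact ContinuousOn.inv₀ continuousOn_id (fun s hs => (hspos s hs).ne')
  -- derivative of ψ on the interior
  have hderiv : ∀ s ∈ Ioo t₀ T, HasDerivAt ψ (M * (s ^ 2)⁻¹ - 1 / g (z s) * q s) s := by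
    intro s hs
    have hsIcc : s ∈ Icc t₀ T := Ioo_subset_Icc_self hs
    have hmeasq : StronglyMeasurableAtFilter q (nhds s) volume :=
      ContinuousOn.stronglyMeasurableAtFilter isOpen_Ioo
        (hqcontOn.mono Ioo_subset_Icc_self) s hs
    have hw' : HasDerivAt w (q s) s :=
      intervalIntegral.integral_hasDerivAt_right (hqint t₀ ht₀Icc s hsIcc hsIcc.1)
        hmeasq (hqcontAt s hsIcc)
    have hz' : HasDerivAt z (q s) s := by
      exact (hw'.const_add z₀)
    have hzspos : (0:ℝ) < z s := hz₀pos.trans_le (hz₀z s hsIcc)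
    have hGint : IntervalIntegrable (fun ξ => 1 / g ξ) volume z₀ (z s) := by
      apply ContinuousOn.intervalIntegrable_of_Icc (hz₀z s hsIcc)
      exact hginv_contOn.mono (fun ξ hξ => lt_of_lt_of_le hz₀pos hξ.1)
    have hmeasG : StronglyMeasurableAtFilter (fun ξ => 1 / g ξ) (nhds (z s)) volume :=
      ContinuousOn.stronglyMeasurableAtFilter isOpen_Ioi hginv_contOn (z s) hzspos
    have hG' : HasDerivAt G (1 / g (z s)) (z s) :=
      intervalIntegral.integral_hasDerivAt_right hGint hmeasG
        (hginv_contOn.continuousAt (Ioi_mem_nhds hzspos))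
    have hφ' : HasDerivAt φ (1 / g (z s) * q s) s := by
      exact (hG'.comp s hz' :)
    have hinv' : HasDerivAt (fun r : ℝ => M * (t₀⁻¹ - r⁻¹)) (M * (s ^ 2)⁻¹) s := by
      have h1 : HasDerivAt (fun r : ℝ => r⁻¹) (-(s ^ 2)⁻¹) s := hasDerivAt_inv (hspos s hsIcc).ne'
      have h2 := (h1.const_sub t₀⁻¹).const_mul M
      simpa using h2
    exact hinv'.sub hφ'
  have hψmono : MonotoneOn ψ (Icc t₀ T) := by
    apply monotoneOn_of_deriv_nonneg (convex_Icc t₀ T) hψcont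
    · intro s hs
      rw [interior_Icc] at hs
      exact (hderiv s hs).differentiableAt.differentiableWithinAt
    · intro s hs
      rw [interior_Icc] at hs
      rw [(hderiv s hs).deriv]
      have hsIcc : s ∈ Icc t₀ T := Ioo_subset_Icc_self hs
      have hgp := hgzpos s hsIcc
      have hs2 : (0:ℝ) < s ^ 2 := pow_pos (hspos s hsIcc) 2
      have hq' : 1 / g (z s) * q s ≤ M * (s ^ 2)⁻¹ := by
        have h1 := hub' s hsIcc
        have : 1 / g (z s) * q s = |u s| / (g (z s) * s ^ 2) := by
          simp only [hqdef]; field_simp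
        rw [this]
        rw [div_le_iff₀ (by positivity)]
        calc |u s| ≤ M * g (z s) := h1
          _ = M * (s ^ 2)⁻¹ * (g (z s) * s ^ 2) := by
              rw [mul_comm (g (z s)), ← mul_assoc, mul_assoc M, inv_mul_cancel₀ hs2.ne', mul_one]
      linarith
  -- evaluate ψ at the endpoints
  have hwt₀ : w t₀ = 0 := intervalIntegral.integral_same
  have hφt₀ : φ t₀ = 0 := by
    simp only [hφdef, hGdef, hzdef, hwt₀, add_zero]
    exact intervalIntegral.integral_same
  clear_value c K M z₀ q w z G φ ψ Y
  have hψT : (0:ℝ) ≤ ψ T := by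
    have := hψmono ht₀Icc hTIcc hT0
    have hψt₀ : ψ t₀ = 0 := by simp [hψdef, hφt₀]
    rw [hψt₀] at this
    exact this
  have hφT : φ T ≤ M * t₀⁻¹ := by
    have hTinv : (0:ℝ) ≤ T⁻¹ := inv_nonneg.mpr (ht₀pos.trans_le hT0).le
    have hexp : ψ T = M * t₀⁻¹ - M * T⁻¹ - φ T := by simp only [hψdef]; ring
    nlinarith [mul_nonneg hM0 hTinv]
  have hφT' : φ T < ∫ ξ in z₀..Z, 1 / g ξ := by
    have h4 : M * t₀⁻¹ ≤ 4 / t₀ * M := by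
      have he : 4 / t₀ * M = 4 * (M * t₀⁻¹) := by ring
      have h1t : (0:ℝ) ≤ M * t₀⁻¹ := mul_nonneg hM0 (inv_nonneg.mpr ht₀pos.le)
      linarith
    linarith
  -- z T ≤ Z
  have hzTZ : z T ≤ Z := by
    by_contra h
    push_neg at h
    have hZpos : (0:ℝ) < Z := hz₀pos.trans hz₀Z
    have hint1 : IntervalIntegrable (fun ξ => 1 / g ξ) volume z₀ Z := by
      apply ContinuousOn.intervalIntegrable_of_Icc hz₀Z.le
      exact hginv_contOn.mono (fun ξ hξ => lt_of_lt_of_le hz₀pos hξ.1)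
    have hint2 : IntervalIntegrable (fun ξ => 1 / g ξ) volume Z (z T) := by
      apply ContinuousOn.intervalIntegrable_of_Icc h.le
      exact hginv_contOn.mono (fun ξ hξ => lt_of_lt_of_le hZpos hξ.1)
    have hadd := intervalIntegral.integral_add_adjacent_intervals hint1 hint2
    have hnn : 0 ≤ ∫ ξ in Z..(z T), 1 / g ξ :=
      intervalIntegral.integral_nonneg h.le
        (fun ξ hξ => hginv_nonneg ξ (hZpos.trans_le hξ.1))
    have : φ T = (∫ ξ in z₀..Z, 1 / g ξ) + ∫ ξ in Z..(z T), 1 / g ξ := by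
      simp only [hφdef, hGdef]
      exact hadd.symm
    linarith [hφT']
  -- conclude
  have hgzT : g (z T) ≤ g Z := hg_mono (hz0' T hTIcc) (zero_le_one.trans hZ1) hzTZ
  have := hub T hTIcc
  have : |u T| ≤ c + K * g Z := by
    have h2 : K * g (z T) ≤ K * g Z := mul_le_mul_of_nonneg_left hgzT hK0
    linarith
  exact this
end

section
/- Let z : [t₀,∞) → [1,∞) (t₀ ≥ 1) be a C¹ nondecreasing function satisfying z′(t) ≤ (4/t²)·[K·g(z(t)) + c] for all t ≥ t₀, where K, c > 0 and g : [0,∞) → [0,∞) is continuous, nondecreasing and positive on (0,∞). If (4/t₀)·(K + c/g(1)) < ∫_{z(t₀)}^{∞} dξ/g(ξ), then z is bounded on [t₀,∞); more precisely ∫_{z(t₀)}^{z(t)} dξ/g(ξ) ≤ (4/t₀)·(K + c/g(1)) for all t ≥ t₀. -/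
open Filter Set MeasureTheory Topology

/-- Bihari-type comparison estimate: if `z : [t₀,∞) → [1,∞)` is `C¹`, nondecreasing and
satisfies `z′(t) ≤ (4/t²)[K g(z(t)) + c]` with `K, c > 0` and `g` continuous,
nondecreasing, nonnegative and positive on `(0,∞)`, and if
`(4/t₀)(K + c/g(1)) < ∫_{z(t₀)}^{∞} dξ/g(ξ)`, then
`∫_{z(t₀)}^{z(t)} dξ/g(ξ) ≤ (4/t₀)(K + c/g(1))` for all `t ≥ t₀` and `z` is bounded. -/
theorem bihari_type_comparison
    (t₀ : ℝ) (ht₀ : 1 ≤ t₀) (K c : ℝ) (hK : 0 < K) (hc : 0 < c)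
    (g : ℝ → ℝ)
    (hg_cont : ContinuousOn g (Set.Ici 0))
    (hg_nonneg : ∀ s ∈ Set.Ici (0 : ℝ), 0 ≤ g s)
    (hg_pos : ∀ s : ℝ, 0 < s → 0 < g s)
    (hg_mono : MonotoneOn g (Set.Ici 0))
    (z z' : ℝ → ℝ)
    (hz : ∀ t ∈ Set.Ici t₀, HasDerivWithinAt z (z' t) (Set.Ici t₀) t)
    (hz'_cont : ContinuousOn z' (Set.Ici t₀))
    (hz_ge : ∀ t ∈ Set.Ici t₀, 1 ≤ z t)
    (hz_mono : MonotoneOn z (Set.Ici t₀))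
    (hz' : ∀ t ∈ Set.Ici t₀, z' t ≤ 4 / t ^ 2 * (K * g (z t) + c))
    (hinit : 4 / t₀ * (K + c / g 1) < ∫ ξ in Set.Ici (z t₀), 1 / g ξ) :
    (∀ t ∈ Set.Ici t₀, (∫ ξ in (z t₀)..(z t), 1 / g ξ) ≤ 4 / t₀ * (K + c / g 1)) ∧
      ∃ M : ℝ, ∀ t ∈ Set.Ici t₀, z t ≤ M := by
  have ht₀0 : (0:ℝ) < t₀ := lt_of_lt_of_le one_pos ht₀
  have hg1 : 0 < g 1 := hg_pos 1 one_pos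
  set B := 4 / t₀ * (K + c / g 1) with hBdef
  have hBpos : 0 < B := by
    have : 0 < K + c / g 1 := by positivity
    positivity
  have hinv_cont : ContinuousOn (fun ξ => 1 / g ξ) (Set.Ici 1) := by
    refine ContinuousOn.div continuousOn_const
      (hg_cont.mono (fun x hx => Set.mem_Ici.mpr (le_trans zero_le_one hx))) ?_
    exact fun x hx => ne_of_gt (hg_pos x (lt_of_lt_of_le one_pos hx))
  have hinv_nonneg : ∀ ξ ∈ Set.Ici (1:ℝ), 0 ≤ 1 / g ξ := by
    intro ξ hξ
    have := hg_pos ξ (lt_of_lt_of_le one_pos hξ)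
    positivity
  -- main estimate
  have key : ∀ t ∈ Set.Ici t₀, (∫ ξ in (z t₀)..(z t), 1 / g ξ) ≤ B := by
    intro t ht
    have hat : t₀ ≤ t := ht
    have huIcc : Set.uIcc t₀ t = Set.Icc t₀ t := Set.uIcc_of_le hat
    have hsub : Set.uIcc t₀ t ⊆ Set.Ici t₀ := by
      rw [huIcc]; exact fun x hx => hx.1
    have hzc : ContinuousOn z (Set.uIcc t₀ t) := fun x hx =>
      ((hz x (hsub hx)).continuousWithinAt).mono hsub
    have hff' : ∀ x ∈ Set.Ioo (min t₀ t) (max t₀ t),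
        HasDerivWithinAt z (z' x) (Set.Ioi x) x := by
      intro x hx
      rw [min_eq_left hat, max_eq_right hat] at hx
      exact (hz x (le_of_lt hx.1)).mono (fun y hy => (hx.1.trans hy).le)
    have hz'c : ContinuousOn z' (Set.uIcc t₀ t) := hz'_cont.mono hsub
    have himg : z '' Set.uIcc t₀ t ⊆ Set.Ici 1 := by
      rintro _ ⟨x, hx, rfl⟩; exact hz_ge x (hsub hx)
    have hgc : ContinuousOn (fun ξ => 1 / g ξ) (z '' Set.uIcc t₀ t) := hinv_cont.mono himg
    have cov : (∫ x in t₀..t, z' x • ((fun ξ => 1 / g ξ) ∘ z) x)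
        = ∫ ξ in (z t₀)..(z t), 1 / g ξ :=
      intervalIntegral.integral_comp_smul_deriv'' hzc hff' hz'c hgc
    have hcomp_cont : ContinuousOn (fun x => z' x * (1 / g (z x))) (Set.uIcc t₀ t) := by
      refine hz'c.mul (hgc.comp hzc ?_)
      exact fun x hx => Set.mem_image_of_mem z hx
    have hpt : ∀ x ∈ Set.Icc t₀ t, z' x * (1 / g (z x)) ≤ 4 / x ^ 2 * (K + c / g 1) := by
      intro x hx
      have hx0 : 0 < x := lt_of_lt_of_le ht₀0 hx.1
      have hzx1 : 1 ≤ z x := hz_ge x hx.1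
      have hG1 : g 1 ≤ g (z x) :=
        hg_mono (by norm_num) (le_trans zero_le_one hzx1) hzx1
      have hG : 0 < g (z x) := lt_of_lt_of_le hg1 hG1
      have h1 : z' x * (1 / g (z x)) ≤ (4 / x ^ 2 * (K * g (z x) + c)) * (1 / g (z x)) :=
        mul_le_mul_of_nonneg_right (hz' x hx.1) (by positivity)
      have h2 : (4 / x ^ 2 * (K * g (z x) + c)) * (1 / g (z x))
          = 4 / x ^ 2 * (K + c / g (z x)) := by
        field_simp
      have h3 : 4 / x ^ 2 * (K + c / g (z x)) ≤ 4 / x ^ 2 * (K + c / g 1) := by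
        gcongr
      linarith [h1, h2 ▸ h1]
    have hcont2 : ContinuousOn (fun x : ℝ => 4 / x ^ 2 * (K + c / g 1)) (Set.uIcc t₀ t) := by
      refine ContinuousOn.mul ?_ continuousOn_const
      refine ContinuousOn.div continuousOn_const ((continuous_pow 2).continuousOn) ?_
      intro x hx
      have : 0 < x := lt_of_lt_of_le ht₀0 ((huIcc ▸ hx).1)
      positivity
    have hint1 : IntervalIntegrable (fun x => z' x * (1 / g (z x))) volume t₀ t :=
      hcomp_cont.intervalIntegrable
    have hint2 : IntervalIntegrable (fun x : ℝ => 4 / x ^ 2 * (K + c / g 1)) volume t₀ t :=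
      hcont2.intervalIntegrable
    have hmono := intervalIntegral.integral_mono_on hat hint1 hint2 hpt
    -- compute the right-hand integral via FTC
    set C := 4 * (K + c / g 1) with hCdef
    have hCpos : 0 < C := by
      have : 0 < K + c / g 1 := by positivity
      positivity
    have hftc : ∀ x ∈ Set.uIcc t₀ t,
        HasDerivAt (fun y : ℝ => -C * y⁻¹) (4 / x ^ 2 * (K + c / g 1)) x := by
      intro x hx
      have hx0 : 0 < x := lt_of_lt_of_le ht₀0 ((huIcc ▸ hx).1)
      have := (hasDerivAt_inv (ne_of_gt hx0)).const_mul (-C)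
      refine this.congr_deriv ?_
      rw [hCdef]
      ring
    have hval : (∫ x in t₀..t, 4 / x ^ 2 * (K + c / g 1))
        = (-C * t⁻¹) - (-C * t₀⁻¹) :=
      intervalIntegral.integral_eq_sub_of_hasDerivAt hftc hint2
    have ht0' : 0 < t := lt_of_lt_of_le ht₀0 hat
    have hCt : 0 ≤ C * t⁻¹ := by positivity
    have hBeq : B = C * t₀⁻¹ := by rw [hBdef, hCdef]; field_simp
    have hfinal : (∫ x in t₀..t, 4 / x ^ 2 * (K + c / g 1)) ≤ B := by
      rw [hval, hBeq]; linarith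
    calc (∫ ξ in (z t₀)..(z t), 1 / g ξ)
        = ∫ x in t₀..t, z' x * (1 / g (z x)) := by
          rw [← cov]; simp [smul_eq_mul, Function.comp]
      _ ≤ ∫ x in t₀..t, 4 / x ^ 2 * (K + c / g 1) := hmono
      _ ≤ B := hfinal
  refine ⟨key, ?_⟩
  -- boundedness
  have hz1 : 1 ≤ z t₀ := hz_ge t₀ Set.self_mem_Ici
  have hIgr : IntegrableOn (fun ξ => 1 / g ξ) (Set.Ici (z t₀)) := by
    by_contra h
    rw [MeasureTheory.integral_undef h] at hinit
    linarith
  have hIoi : IntegrableOn (fun ξ => 1 / g ξ) (Set.Ioi (z t₀)) :=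
    hIgr.mono_set Set.Ioi_subset_Ici_self
  have hIeq : (∫ ξ in Set.Ici (z t₀), 1 / g ξ) = ∫ ξ in Set.Ioi (z t₀), 1 / g ξ :=
    MeasureTheory.integral_Ici_eq_integral_Ioi
  have htend : Tendsto (fun x => ∫ ξ in (z t₀)..x, 1 / g ξ) atTop
      (𝓝 (∫ ξ in Set.Ioi (z t₀), 1 / g ξ)) :=
    MeasureTheory.intervalIntegral_tendsto_integral_Ioi _ hIoi tendsto_id
  have hev : ∀ᶠ x in atTop, B < ∫ ξ in (z t₀)..x, 1 / g ξ :=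
    htend.eventually (eventually_gt_nhds (hIeq ▸ hinit))
  obtain ⟨a, ha⟩ := hev.exists_forall_of_atTop
  refine ⟨max a (z t₀), ?_⟩
  intro t ht
  by_contra hcon
  push_neg at hcon
  set M := max a (z t₀) with hMdef
  have hM1 : z t₀ ≤ M := le_max_right _ _
  have haM : a ≤ M := le_max_left _ _
  have hBM : B < ∫ ξ in (z t₀)..M, 1 / g ξ := ha M haM
  have hMz : M ≤ z t := hcon.le
  have hintz : IntervalIntegrable (fun ξ => 1 / g ξ) volume (z t₀) (z t) := by
    apply ContinuousOn.intervalIntegrable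
    refine hinv_cont.mono ?_
    rw [Set.uIcc_of_le (hM1.trans hMz)]
    exact fun x hx => le_trans hz1 hx.1
  have hnn : (0:ℝ→ℝ) ≤ᵐ[volume.restrict (Set.Ioc (z t₀) (z t))] fun ξ => 1 / g ξ := by
    filter_upwards [MeasureTheory.ae_restrict_mem measurableSet_Ioc] with ξ hξ
    exact hinv_nonneg ξ (le_trans hz1 hξ.1.le)
  have hmono2 : (∫ ξ in (z t₀)..M, 1 / g ξ) ≤ ∫ ξ in (z t₀)..(z t), 1 / g ξ :=
    intervalIntegral.integral_mono_interval le_rfl hM1 hMz hnn hintz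
  have := key t ht
  linarith
end

section
/- Let n ≥ 2 be an integer and define A : [1,∞) → ℝ by A(t) = −4n(2n−2)^{−2} for t ∈ [1,2], A(t) = −2n(2n−2)^{−2}(4−t) for t ∈ [2,4], and A(t) = 0 for t ≥ 4. Then the function x(t) = (2−t)^{−1/(n−1)}, defined on [1,2), satisfies x″(t) + A(t)·x(t)^{2n−1} = 0 for all t ∈ [1,2), and x(t) → +∞ as t → 2⁻; i.e. the Emden–Fowler equation x″ + A(t)x^{2n−1} = 0 possesses a solution that blows up in finite time. -/
open Filter Set

/-- Finite-time blow-up example: for `n ≥ 2` and the piecewise coefficient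
`A(t) = −4n(2n−2)^{−2}` on `[1,2]`, `A(t) = −2n(2n−2)^{−2}(4−t)` on `[2,4]`, `A(t) = 0`
for `t ≥ 4`, the function `x(t) = (2−t)^{−1/(n−1)}` solves `x″ + A(t)x^{2n−1} = 0` on
`[1,2)` and blows up (`x(t) → +∞`) as `t → 2⁻`. -/
theorem emden_fowler_finite_time_blow_up
    (n : ℕ) (hn : 2 ≤ n) (A : ℝ → ℝ)
    (hA₁ : ∀ t ∈ Set.Icc (1 : ℝ) 2, A t = -(4 * n) / (2 * n - 2) ^ 2)
    (hA₂ : ∀ t ∈ Set.Icc (2 : ℝ) 4, A t = -(2 * n) / (2 * n - 2) ^ 2 * (4 - t))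
    (hA₃ : ∀ t : ℝ, 4 ≤ t → A t = 0) :
    ∃ x' x'' : ℝ → ℝ,
      (∀ t ∈ Set.Ico (1 : ℝ) 2,
        HasDerivAt (fun s : ℝ => (2 - s) ^ (-(1 : ℝ) / ((n : ℝ) - 1))) (x' t) t) ∧
      (∀ t ∈ Set.Ico (1 : ℝ) 2, HasDerivAt x' (x'' t) t) ∧
      (∀ t ∈ Set.Ico (1 : ℝ) 2,
        x'' t + A t * ((2 - t) ^ (-(1 : ℝ) / ((n : ℝ) - 1))) ^ (2 * n - 1) = 0) ∧
      Tendsto (fun t : ℝ => (2 - t) ^ (-(1 : ℝ) / ((n : ℝ) - 1)))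
        (nhdsWithin 2 (Set.Iio 2)) atTop := by
  have hn1 : (2:ℝ) ≤ (n:ℝ) := by exact_mod_cast hn
  set α : ℝ := -(1:ℝ) / ((n:ℝ) - 1) with hα
  have hc : (n:ℝ) - 1 ≠ 0 := by linarith
  have hneg : α < 0 := by
    rw [hα]; exact div_neg_of_neg_of_pos (by norm_num) (by linarith)
  refine ⟨fun t => (-1) * α * (2 - t) ^ (α - 1),
    fun t => (-1) * α * ((-1) * (α - 1) * (2 - t) ^ (α - 1 - 1)), ?_, ?_, ?_, ?_⟩
  · intro t ht
    have h0 : (0:ℝ) < 2 - t := by linarith [ht.2]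
    exact ((hasDerivAt_id t).const_sub 2).rpow_const (Or.inl h0.ne')
  · intro t ht
    have h0 : (0:ℝ) < 2 - t := by linarith [ht.2]
    exact (((hasDerivAt_id t).const_sub 2).rpow_const (Or.inl h0.ne')).const_mul ((-1) * α)
  · intro t ht
    have h0 : (0:ℝ) < 2 - t := by linarith [ht.2]
    rw [hA₁ t ⟨ht.1, ht.2.le⟩]
    have hpow : ((2 - t) ^ α) ^ (2 * n - 1) = (2 - t) ^ (α - 1 - 1) := by
      rw [← Real.rpow_natCast ((2 - t) ^ α) (2 * n - 1), ← Real.rpow_mul h0.le]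
      congr 1
      have hcast : ((2 * n - 1 : ℕ) : ℝ) = 2 * (n:ℝ) - 1 := by
        have : 1 ≤ 2 * n := by omega
        push_cast [this]; ring
      rw [hcast, hα]; field_simp; ring
    rw [hpow]
    have h2n : (2 * (n:ℝ) - 2) ≠ 0 := by linarith
    have hco : (-1) * α * ((-1) * (α - 1)) + -(4 * (n:ℝ)) / (2 * (n:ℝ) - 2) ^ 2 = 0 := by
      rw [hα]; field_simp; ring
    linear_combination (2 - t) ^ (α - 1 - 1) * hco
  · have h1 : Tendsto (fun t : ℝ => 2 - t) (nhdsWithin 2 (Set.Iio 2)) (nhdsWithin 0 (Set.Ioi 0)) := by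
      apply tendsto_nhdsWithin_of_tendsto_nhds_of_eventually_within
      · have h4 : Tendsto (fun t : ℝ => 2 - t) (nhds 2) (nhds (2 - 2)) :=
          tendsto_const_nhds.sub tendsto_id
        norm_num at h4
        exact h4.mono_left nhdsWithin_le_nhds
      · filter_upwards [self_mem_nhdsWithin] with t ht
        rw [Set.mem_Iio] at ht
        exact sub_pos.2 ht
    have h2 : Tendsto (fun y : ℝ => y ^ α) (nhdsWithin 0 (Set.Ioi 0)) atTop := by
      have h3 := (tendsto_rpow_atTop (y := -α) (by linarith)).comp tendsto_inv_nhdsGT_zero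
      refine h3.congr' ?_
      filter_upwards [self_mem_nhdsWithin] with y hy
      have hy0 : (0:ℝ) < y := hy
      simp only [Function.comp]
      rw [Real.rpow_neg (inv_nonneg.2 hy0.le), Real.inv_rpow hy0.le, inv_inv]
    exact h2.comp h1
end
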